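/- For every pair κ = ⟨[p₁,…,p_n],[t₁,…,t_n]⟩ of equal-length sequences of positive integers, there is a database-preserving ΣQ-homomorphism from chase_{T_myth}(River_κ) to River_κ if and only if there exists m with 1 ≤ m < n such that t_m ≠ p_{m+1}. -/

import Mathlib

set_option autoImplicit false

/-! ### Terms: constants from 𝐂 (coded `Term.const n`) and nulls from 𝐍 (coded `Term.null n`) -/

inductive Term : Type
  | const : ℕ → Term
  | null  : ℕ → Term
deriving DecidableEq

def Term.isConst : Term → Prop
  | .const _ => True
  | .null _  => False

def termEquiv : Term ≃ ℕ ⊕ ℕ where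
  toFun t := match t with
    | .const n => Sum.inl n
    | .null n  => Sum.inr n
  invFun x := match x with
    | Sum.inl n => .const n
    | Sum.inr n => .null n
  left_inv t := by cases t <;> rfl
  right_inv x := by cases x <;> rfl

instance : Primcodable Term := Primcodable.ofEquiv _ termEquiv

/-! ### Relation symbols (with arity) and schemas -/

structure RelSym : Type where
  name : ℕ
  arity : ℕ
deriving DecidableEq

def relSymEquiv : RelSym ≃ ℕ × ℕ where
  toFun r := (r.name, r.arity)
  invFun p := ⟨p.1, p.2⟩
  left_inv r := rfl
  right_inv p := rfl

instance : Primcodable RelSym := Primcodable.ofEquiv _ relSymEquiv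

/-- A schema is a set of relation symbols. -/
abbrev Schema := Set RelSym

/-! ### Facts, instances, databases -/

structure Fct : Type where
  rel : RelSym
  args : List Term
deriving DecidableEq

def fctEquiv : Fct ≃ RelSym × List Term where
  toFun f := (f.rel, f.args)
  invFun p := ⟨p.1, p.2⟩
  left_inv f := rfl
  right_inv p := rfl

instance : Primcodable Fct := Primcodable.ofEquiv _ fctEquiv

/-- A fact is well-formed if its argument tuple matches the arity of its relation symbol
(arities are ≥ 1). -/
def Fct.wf (f : Fct) : Prop := f.args.length = f.rel.arity ∧ 1 ≤ f.rel.arity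

/-- An instance is a (possibly infinite) set of facts. -/
abbrev Inst := Set Fct

/-- The active domain of an instance. -/
def adom (I : Inst) : Set Term := { t | ∃ f ∈ I, t ∈ f.args }

/-- A database: a finite instance of well-formed facts using only constants from 𝐂. -/
def IsDB (I : Inst) : Prop :=
  I.Finite ∧ ∀ f ∈ I, f.wf ∧ ∀ t ∈ f.args, t.isConst

/-- `I` is a Σ-instance. -/
def InstOver (I : Inst) (S : Schema) : Prop := ∀ f ∈ I, f.rel ∈ S ∧ f.wf

/-- `I` is a Σ-database. -/
def IsDatabase (I : Inst) (S : Schema) : Prop := IsDB I ∧ ∀ f ∈ I, f.rel ∈ S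

/-! ### Homomorphisms -/

def Fct.map (h : Term → Term) (f : Fct) : Fct := ⟨f.rel, f.args.map h⟩

/-- `h` is a Σ-homomorphism from `I` to `J`. -/
def IsHomOn (S : Schema) (h : Term → Term) (I J : Inst) : Prop :=
  ∀ f ∈ I, f.rel ∈ S → f.map h ∈ J

/-- `h` is a homomorphism from `I` to `J` (all relation symbols). -/
def IsFullHom (h : Term → Term) (I J : Inst) : Prop := ∀ f ∈ I, f.map h ∈ J

/-- `h` is database-preserving: it is the identity on all constants from 𝐂. -/
def DBPres (h : Term → Term) : Prop := ∀ n : ℕ, h (Term.const n) = Term.const n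

/-- `I →_Σ J`: there is a database-preserving Σ-homomorphism from `I` to `J`. -/
def HomTo (S : Schema) (I J : Inst) : Prop := ∃ h, DBPres h ∧ IsHomOn S h I J

/-- The induced subinstance of `I` on a set `A` of terms. -/
def restrict (I : Inst) (A : Set Term) : Inst := { f | f ∈ I ∧ ∀ t ∈ f.args, t ∈ A }

/-- `I →ⁿ_Σ J`: every induced subinstance of `I` with at most `n` active-domain elements
admits a database-preserving Σ-homomorphism to `J`. -/
def HomN (S : Schema) (n : ℕ) (I J : Inst) : Prop :=
  ∀ A : Set Term, A ⊆ adom I → A.Finite → A.ncard ≤ n → HomTo S (restrict I A) J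

/-- `I →^lim_Σ J`. -/
def HomLim (S : Schema) (I J : Inst) : Prop := ∀ n : ℕ, 1 ≤ n → HomN S n I J

/-- Homomorphic equivalence of instances. -/
def HomEquiv (I J : Inst) : Prop := (∃ h, IsFullHom h I J) ∧ (∃ h, IsFullHom h J I)

/-! ### Gaifman graph and connectedness -/

def coOccur (I : Inst) (a b : Term) : Prop := ∃ f ∈ I, a ∈ f.args ∧ b ∈ f.args

/-- The Gaifman graph of `I` is connected. -/
def Connected (I : Inst) : Prop :=
  ∀ a ∈ adom I, ∀ b ∈ adom I, Relation.ReflTransGen (coOccur I) a b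

/-- Restriction `I|_Σ` of `I` to the facts using a relation symbol from Σ. -/
def restrS (I : Inst) (S : Schema) : Inst := { f | f ∈ I ∧ f.rel ∈ S }

/-- `I` is Σ-connected. -/
def SConnected (S : Schema) (I : Inst) : Prop := Connected (restrS I S)

/-- `C` is a maximally Σ-connected component of `I`. -/
def MaxConnComp (S : Schema) (I C : Inst) : Prop :=
  C ⊆ restrS I S ∧ Connected C ∧
    ∀ C', C ⊆ C' → C' ⊆ restrS I S → Connected C' → C' = C

/-! ### Conjunctive queries -/

structure Atom : Type where
  rel : RelSym
  args : List ℕ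
deriving DecidableEq

def atomEquiv : Atom ≃ RelSym × List ℕ where
  toFun a := (a.rel, a.args)
  invFun p := ⟨p.1, p.2⟩
  left_inv a := rfl
  right_inv p := rfl

instance : Primcodable Atom := Primcodable.ofEquiv _ atomEquiv

def Atom.wf (a : Atom) : Prop := a.args.length = a.rel.arity ∧ 1 ≤ a.rel.arity

/-- Instantiate an atom by an assignment of terms to variables. -/
def Atom.inst (h : ℕ → Term) (a : Atom) : Fct := ⟨a.rel, a.args.map h⟩

/-- A conjunctive query: a finite set of relational atoms (as a list) together with a
tuple of answer variables. -/
structure CQ : Type where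
  atoms : List Atom
  ans : List ℕ
deriving DecidableEq

def cqEquiv : CQ ≃ List Atom × List ℕ where
  toFun q := (q.atoms, q.ans)
  invFun p := ⟨p.1, p.2⟩
  left_inv q := rfl
  right_inv p := rfl

instance : Primcodable CQ := Primcodable.ofEquiv _ cqEquiv

/-- `q` is a CQ over schema Σ. -/
def CQ.Over (q : CQ) (S : Schema) : Prop := ∀ a ∈ q.atoms, a.rel ∈ S ∧ a.wf

/-- A homomorphism from `q` to `I`. -/
def CQHom (q : CQ) (I : Inst) (h : ℕ → Term) : Prop := ∀ a ∈ q.atoms, a.inst h ∈ I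

/-- `c̄` is an answer to `q` on `I`. -/
def IsAnswer (q : CQ) (I : Inst) (c : List Term) : Prop :=
  (∀ x ∈ c, x ∈ adom I) ∧ ∃ h, CQHom q I h ∧ q.ans.map h = c

/-- The canonical database of a CQ (variables viewed as constants/nulls). -/
def canonDB (q : CQ) : Inst := { f | ∃ a ∈ q.atoms, f = a.inst Term.null }

/-! ### Tuple-generating dependencies -/

/-- A TGD `∀x̄∀ȳ (φ(x̄,ȳ) → ∃z̄ ψ(x̄,z̄))`, with `frontier` the tuple `x̄` of
frontier variables. -/
structure TGD : Type where
  body : List Atom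
  head : List Atom
  frontier : List ℕ
deriving DecidableEq

def tgdEquiv : TGD ≃ List Atom × List Atom × List ℕ where
  toFun t := (t.body, t.head, t.frontier)
  invFun p := ⟨p.1, p.2.1, p.2.2⟩
  left_inv t := rfl
  right_inv p := rfl

instance : Primcodable TGD := Primcodable.ofEquiv _ tgdEquiv

def TGD.bodyVars (t : TGD) : Set ℕ := { x | ∃ a ∈ t.body, x ∈ a.args }
def TGD.headVars (t : TGD) : Set ℕ := { x | ∃ a ∈ t.head, x ∈ a.args }

/-- Well-formedness of a TGD: atoms are well-formed, the frontier variables are distinct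
body variables, and every variable shared by body and head is a frontier variable. -/
def TGD.wf (t : TGD) : Prop :=
  (∀ a ∈ t.body, a.wf) ∧ (∀ a ∈ t.head, a.wf) ∧ t.frontier.Nodup ∧
  (∀ x ∈ t.frontier, x ∈ t.bodyVars) ∧
  (∀ x, x ∈ t.bodyVars → x ∈ t.headVars → x ∈ t.frontier)

/-- A TGD is linear if its body contains at most one atom. -/
def TGD.Linear (t : TGD) : Prop := t.body.length ≤ 1

/-- A TGD is guarded if some body atom contains all body variables. -/
def TGD.Guarded (t : TGD) : Prop := ∃ a ∈ t.body, ∀ x, x ∈ t.bodyVars → x ∈ a.args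

/-- A TGD is frontier-one if it has exactly one frontier variable. -/
def TGD.FrontierOne (t : TGD) : Prop := t.frontier.length = 1

/-- `I ⊨ ϑ`. -/
def TGD.Satisfies (I : Inst) (t : TGD) : Prop :=
  ∀ g : ℕ → Term, (∀ a ∈ t.body, a.inst g ∈ I) →
    ∃ h : ℕ → Term, (∀ a ∈ t.head, a.inst h ∈ I) ∧ ∀ x ∈ t.frontier, h x = g x

/-- `I` is a model of the set `T` of TGDs. -/
def IsModel (I : Inst) (T : List TGD) : Prop := ∀ t ∈ T, TGD.Satisfies I t

/-- Number of (distinct) variables in the body of a TGD. -/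
def TGD.bodyVarList (t : TGD) : List ℕ := ((t.body.map Atom.args).flatten).dedup

/-- The body width of a set of TGDs. -/
def bodyWidth (T : List TGD) : ℕ := (T.map (fun t => t.bodyVarList.length)).foldr max 0

/-! ### The chase -/

/-- `ϑ` is applicable at tuple `c̄` in `I`. -/
def TGD.Applicable (t : TGD) (I : Inst) (c : List Term) : Prop :=
  (∃ g : ℕ → Term, (∀ a ∈ t.body, a.inst g ∈ I) ∧ t.frontier.map g = c) ∧
  ¬ (∃ h : ℕ → Term, (∀ a ∈ t.head, a.inst h ∈ I) ∧ t.frontier.map h = c)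

/-- `J` is the result of applying `ϑ` in `I` at `c̄`: the head is added, with the
existential variables replaced by distinct fresh nulls. -/
def TGD.StepResult (t : TGD) (I : Inst) (c : List Term) (J : Inst) : Prop :=
  ∃ h : ℕ → Term,
    t.frontier.map h = c ∧
    (∀ x, x ∈ t.headVars → x ∉ t.frontier → (¬ (h x).isConst ∧ h x ∉ adom I)) ∧
    (∀ x y, x ∈ t.headVars → y ∈ t.headVars → x ∉ t.frontier → y ∉ t.frontier →
      h x = h y → x = y) ∧
    J = I ∪ { f | ∃ a ∈ t.head, f = a.inst h }

/-- A chase step from `I` to `J` with some TGD of `T`. -/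
def ChaseStep (T : List TGD) (I J : Inst) : Prop :=
  ∃ t ∈ T, ∃ c, t.Applicable I c ∧ t.StepResult I c J

/-- A chase sequence for `I` with `T` (stalling when no TGD is applicable). -/
def IsChaseSeq (T : List TGD) (I : Inst) (f : ℕ → Inst) : Prop :=
  f 0 = I ∧ ∀ i, ChaseStep T (f i) (f (i+1)) ∨ ((¬ ∃ J, ChaseStep T (f i) J) ∧ f (i+1) = f i)

/-- Fairness: every applicable TGD application is eventually performed or becomes
non-applicable. -/
def IsFair (T : List TGD) (f : ℕ → Inst) : Prop :=
  ∀ i, ∀ t ∈ T, ∀ c, TGD.Applicable t (f i) c →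
    ∃ j, i ≤ j ∧
      ((TGD.Applicable t (f j) c ∧ TGD.StepResult t (f j) c (f (j+1))) ∨
        ¬ TGD.Applicable t (f j) c)

/-- `J` is the result of some fair chase sequence for `I` with `T`. -/
def IsChaseResult (T : List TGD) (I J : Inst) : Prop :=
  ∃ f : ℕ → Inst, IsChaseSeq T I f ∧ IsFair T f ∧ J = ⋃ i, f i

/-- `chase T I`: the result of an arbitrary but fixed fair chase sequence for `I` with `T`. -/
noncomputable def chase (T : List TGD) (I : Inst) : Inst :=
  @dite _ (∃ J, IsChaseResult T I J) (Classical.dec _) (fun h => h.choose) (fun _ => I)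

/-! ### The set of TGDs `T_myth`, the schema `ΣQ`, and the databases `River_κ` -/

def EncR : RelSym := ⟨0, 2⟩
def MR : RelSym := ⟨1, 5⟩
def PyrR : RelSym := ⟨2, 2⟩
def ThiR : RelSym := ⟨3, 2⟩
def ChnR : RelSym := ⟨4, 2⟩
def MouthR : RelSym := ⟨5, 1⟩

/-- The query schema `ΣQ = {Pyramus, Thisbe, Channel, Encounter, Mouth}`. -/
def SQmyth : Schema := {PyrR, ThiR, ChnR, EncR, MouthR}

/-- `T_myth`: `Encounter(p,t) → ∃p',c,t' M(p,p',c,t',t)`;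
`M(p,p',c,t',t) → ∃p'',c',t'' M(p',p'',c',t'',t')`;
`M(p,p',c,t',t) → Pyramus(p,p') ∧ Thisbe(t,t') ∧ Channel(c,p') ∧ Channel(c,t')`
(variables coded by the numbers `0,1,2,…`). -/
def Tmyth : List TGD :=
  [ ⟨[⟨EncR, [0, 1]⟩], [⟨MR, [0, 2, 3, 4, 1]⟩], [0, 1]⟩,
    ⟨[⟨MR, [0, 1, 2, 3, 4]⟩], [⟨MR, [1, 5, 6, 7, 3]⟩], [1, 3]⟩,
    ⟨[⟨MR, [0, 1, 2, 3, 4]⟩],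
      [⟨PyrR, [0, 1]⟩, ⟨ThiR, [4, 3]⟩, ⟨ChnR, [2, 1]⟩, ⟨ChnR, [2, 3]⟩], [0, 1, 2, 3, 4]⟩ ]

/-- The eternity `e₁`. -/
def e1 : Term := .const (Nat.pair 0 0)
/-- The eternity `e₂`. -/
def e2 : Term := .const (Nat.pair 1 0)
/-- The channel `c`. -/
def chanC : Term := .const (Nat.pair 2 0)
/-- The bridge `b_i`. -/
def br (i : ℕ) : Term := .const (Nat.pair 3 i)
/-- The `j`-th intermediate constant on the Pyramus-path of the `i`-th segment. -/
def pyrC (i j : ℕ) : Term := .const (Nat.pair 4 (Nat.pair i j))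
/-- The `j`-th intermediate constant on the Thisbe-path of the `i`-th segment. -/
def thiC (i j : ℕ) : Term := .const (Nat.pair 5 (Nat.pair i j))

/-- The `j`-th node (counted from `b_{i-1}`) on the Pyramus-path from `b_i` to `b_{i-1}`. -/
def pnode (p : List ℕ) (i j : ℕ) : Term :=
  if j = 0 then br (i - 1) else if j = p.getD (i - 1) 0 then br i else pyrC i j

/-- The `j`-th node (counted from `b_{i-1}`) on the Thisbe-path from `b_i` to `b_{i-1}`. -/
def tnode (t : List ℕ) (i j : ℕ) : Term :=
  if j = 0 then br (i - 1) else if j = t.getD (i - 1) 0 then br i else thiC i j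

def f2 (R : RelSym) (a b : Term) : Fct := ⟨R, [a, b]⟩

/-- The worldly constants of `River_⟨p,t⟩` (all constants except `e₁`, `e₂`, `c`). -/
def Worldly (p t : List ℕ) (a : Term) : Prop :=
  (∃ i, i ≤ p.length ∧ a = br i) ∨
  (∃ i j, 1 ≤ i ∧ i ≤ p.length ∧ 1 ≤ j ∧ j < p.getD (i - 1) 0 ∧ a = pyrC i j) ∨
  (∃ i j, 1 ≤ i ∧ i ≤ t.length ∧ 1 ≤ j ∧ j < t.getD (i - 1) 0 ∧ a = thiC i j)

/-- The database `River_κ` for `κ = ⟨[p₁,…,p_n], [t₁,…,t_n]⟩`. -/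
def River (p t : List ℕ) : Inst :=
  { f | ∃ i j, 1 ≤ i ∧ i ≤ p.length ∧ 1 ≤ j ∧ j ≤ p.getD (i - 1) 0 ∧
        f = f2 PyrR (pnode p i j) (pnode p i (j - 1)) } ∪
  { f | ∃ i j, 1 ≤ i ∧ i ≤ t.length ∧ 1 ≤ j ∧ j ≤ t.getD (i - 1) 0 ∧
        f = f2 ThiR (tnode t i j) (tnode t i (j - 1)) } ∪
  { f | ∃ i j, 1 ≤ i ∧ i ≤ t.length ∧ 1 ≤ j ∧ j < t.getD (i - 1) 0 ∧
        f = f2 ThiR (thiC i j) e1 } ∪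
  { f | ∃ i j, 1 ≤ i ∧ i ≤ p.length ∧ 1 ≤ j ∧ j < p.getD (i - 1) 0 ∧
        f = f2 PyrR (pyrC i j) e2 } ∪
  { f | ∃ i, i ≤ p.length ∧ (f = f2 ThiR (br i) e2 ∨ f = f2 PyrR (br i) e1) } ∪
  { f2 PyrR e1 e1, f2 ThiR e1 e1, f2 ChnR e1 e1,
    f2 PyrR e2 e2, f2 ThiR e2 e2, f2 ChnR e2 e2 } ∪
  { f | ∃ a, Worldly p t a ∧ f = f2 ChnR chanC a } ∪
  { f2 EncR (br p.length) (br (p.length - 1)), ⟨MouthR, [br 0]⟩ }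


/-! ### Auxiliary development -/

section Aux

open Finset

lemma mapEqOn {α β : Type*} {f g : α → β} {l : List α} (h : l.map f = l.map g) :
    ∀ x ∈ l, f x = g x := by
  induction l with
  | nil => simp
  | cons a l ih => simp_all

@[simp] lemma constPair_eq (a b c d : ℕ) :
    (Term.const (Nat.pair a b) = Term.const (Nat.pair c d)) ↔ (a = c ∧ b = d) := by
  simp [Nat.pair_eq_pair]

lemma br_inj {i j : ℕ} (h : br i = br j) : i = j := by
  simp [br] at h; omega

lemma f2_eq {R R' : RelSym} {a b a' b' : Term} :
    f2 R a b = f2 R' a' b' ↔ (R = R' ∧ a = a' ∧ b = b') := by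
  simp [f2]

/-! ### River membership API -/

lemma mem_River {p t : List ℕ} {f : Fct} : f ∈ River p t ↔
    (∃ i j, 1 ≤ i ∧ i ≤ p.length ∧ 1 ≤ j ∧ j ≤ p.getD (i-1) 0 ∧
      f = f2 PyrR (pnode p i j) (pnode p i (j-1))) ∨
    (∃ i j, 1 ≤ i ∧ i ≤ t.length ∧ 1 ≤ j ∧ j ≤ t.getD (i-1) 0 ∧
      f = f2 ThiR (tnode t i j) (tnode t i (j-1))) ∨
    (∃ i j, 1 ≤ i ∧ i ≤ t.length ∧ 1 ≤ j ∧ j < t.getD (i-1) 0 ∧ f = f2 ThiR (thiC i j) e1) ∨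
    (∃ i j, 1 ≤ i ∧ i ≤ p.length ∧ 1 ≤ j ∧ j < p.getD (i-1) 0 ∧ f = f2 PyrR (pyrC i j) e2) ∨
    (∃ i, i ≤ p.length ∧ (f = f2 ThiR (br i) e2 ∨ f = f2 PyrR (br i) e1)) ∨
    (f = f2 PyrR e1 e1 ∨ f = f2 ThiR e1 e1 ∨ f = f2 ChnR e1 e1 ∨ f = f2 PyrR e2 e2 ∨
      f = f2 ThiR e2 e2 ∨ f = f2 ChnR e2 e2) ∨
    (∃ a, Worldly p t a ∧ f = f2 ChnR chanC a) ∨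
    (f = f2 EncR (br p.length) (br (p.length-1)) ∨ f = ⟨MouthR, [br 0]⟩) := by
  simp only [River, Set.mem_union, Set.mem_setOf_eq, Set.mem_insert_iff, Set.mem_singleton_iff,
    or_assoc]

lemma riv_pyrEdge {p t : List ℕ} {i j : ℕ} (h1 : 1 ≤ i) (h2 : i ≤ p.length) (h3 : 1 ≤ j)
    (h4 : j ≤ p.getD (i-1) 0) : f2 PyrR (pnode p i j) (pnode p i (j-1)) ∈ River p t :=
  mem_River.2 (Or.inl ⟨i, j, h1, h2, h3, h4, rfl⟩)

lemma riv_thiEdge {p t : List ℕ} {i j : ℕ} (h1 : 1 ≤ i) (h2 : i ≤ t.length) (h3 : 1 ≤ j)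
    (h4 : j ≤ t.getD (i-1) 0) : f2 ThiR (tnode t i j) (tnode t i (j-1)) ∈ River p t :=
  mem_River.2 (Or.inr (Or.inl ⟨i, j, h1, h2, h3, h4, rfl⟩))

lemma riv_thiC_e1 {p t : List ℕ} {i j : ℕ} (h1 : 1 ≤ i) (h2 : i ≤ t.length) (h3 : 1 ≤ j)
    (h4 : j < t.getD (i-1) 0) : f2 ThiR (thiC i j) e1 ∈ River p t :=
  mem_River.2 (Or.inr (Or.inr (Or.inl ⟨i, j, h1, h2, h3, h4, rfl⟩)))

lemma riv_pyrC_e2 {p t : List ℕ} {i j : ℕ} (h1 : 1 ≤ i) (h2 : i ≤ p.length) (h3 : 1 ≤ j)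
    (h4 : j < p.getD (i-1) 0) : f2 PyrR (pyrC i j) e2 ∈ River p t :=
  mem_River.2 (Or.inr (Or.inr (Or.inr (Or.inl ⟨i, j, h1, h2, h3, h4, rfl⟩))))

lemma riv_br_thi_e2 {p t : List ℕ} {i : ℕ} (h2 : i ≤ p.length) :
    f2 ThiR (br i) e2 ∈ River p t :=
  mem_River.2 (Or.inr (Or.inr (Or.inr (Or.inr (Or.inl ⟨i, h2, Or.inl rfl⟩)))))

lemma riv_br_pyr_e1 {p t : List ℕ} {i : ℕ} (h2 : i ≤ p.length) :
    f2 PyrR (br i) e1 ∈ River p t :=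
  mem_River.2 (Or.inr (Or.inr (Or.inr (Or.inr (Or.inl ⟨i, h2, Or.inr rfl⟩)))))

lemma riv_et {p t : List ℕ} {x : Term} (hx : x = e1 ∨ x = e2) {R : RelSym}
    (hR : R = PyrR ∨ R = ThiR ∨ R = ChnR) : f2 R x x ∈ River p t := by
  refine mem_River.2 (Or.inr (Or.inr (Or.inr (Or.inr (Or.inr (Or.inl ?_))))))
  rcases hx with rfl|rfl <;> rcases hR with rfl|rfl|rfl <;> tauto

lemma riv_chan {p t : List ℕ} {a : Term} (h : Worldly p t a) : f2 ChnR chanC a ∈ River p t :=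
  mem_River.2 (Or.inr (Or.inr (Or.inr (Or.inr (Or.inr (Or.inr (Or.inl ⟨a, h, rfl⟩)))))))

lemma riv_enc_mem {p t : List ℕ} : f2 EncR (br p.length) (br (p.length-1)) ∈ River p t :=
  mem_River.2 (Or.inr (Or.inr (Or.inr (Or.inr (Or.inr (Or.inr (Or.inr (Or.inl rfl))))))))

/-! ### Classification lemmas -/

lemma riv_pyr {p t : List ℕ} {x y : Term} (h : f2 PyrR x y ∈ River p t) :
    (∃ i j, 1 ≤ i ∧ i ≤ p.length ∧ 1 ≤ j ∧ j ≤ p.getD (i-1) 0 ∧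
      x = pnode p i j ∧ y = pnode p i (j-1)) ∨
    (∃ i j, 1 ≤ i ∧ i ≤ p.length ∧ 1 ≤ j ∧ j < p.getD (i-1) 0 ∧ x = pyrC i j ∧ y = e2) ∨
    (∃ i, i ≤ p.length ∧ x = br i ∧ y = e1) ∨ (x = e1 ∧ y = e1) ∨ (x = e2 ∧ y = e2) := by
  rw [mem_River] at h
  rcases h with ⟨i,j,h1,h2,h3,h4,h5⟩|⟨i,j,h1,h2,h3,h4,h5⟩|⟨i,j,h1,h2,h3,h4,h5⟩|
    ⟨i,j,h1,h2,h3,h4,h5⟩|⟨i,h1,h5|h5⟩|(h5|h5|h5|h5|h5|h5)|⟨a,h1,h5⟩|(h5|h5)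
  · exact Or.inl ⟨i, j, h1, h2, h3, h4, (f2_eq.1 h5).2.1, (f2_eq.1 h5).2.2⟩
  · exact absurd (congrArg Fct.rel h5) (by simp [f2, PyrR, ThiR])
  · exact absurd (congrArg Fct.rel h5) (by simp [f2, PyrR, ThiR])
  · exact Or.inr (Or.inl ⟨i, j, h1, h2, h3, h4, (f2_eq.1 h5).2.1, (f2_eq.1 h5).2.2⟩)
  · exact absurd (congrArg Fct.rel h5) (by simp [f2, PyrR, ThiR])
  · exact Or.inr (Or.inr (Or.inl ⟨i, h1, (f2_eq.1 h5).2.1, (f2_eq.1 h5).2.2⟩))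
  · exact Or.inr (Or.inr (Or.inr (Or.inl ⟨(f2_eq.1 h5).2.1, (f2_eq.1 h5).2.2⟩)))
  · exact absurd (congrArg Fct.rel h5) (by simp [f2, PyrR, ThiR])
  · exact absurd (congrArg Fct.rel h5) (by simp [f2, PyrR, ChnR])
  · exact Or.inr (Or.inr (Or.inr (Or.inr ⟨(f2_eq.1 h5).2.1, (f2_eq.1 h5).2.2⟩)))
  · exact absurd (congrArg Fct.rel h5) (by simp [f2, PyrR, ThiR])
  · exact absurd (congrArg Fct.rel h5) (by simp [f2, PyrR, ChnR])
  · exact absurd (congrArg Fct.rel h5) (by simp [f2, PyrR, ChnR])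
  · exact absurd (congrArg Fct.rel h5) (by simp [f2, PyrR, EncR])
  · exact absurd (congrArg Fct.rel h5) (by simp [f2, PyrR, MouthR])

lemma riv_thi {p t : List ℕ} {x y : Term} (h : f2 ThiR x y ∈ River p t) :
    (∃ i j, 1 ≤ i ∧ i ≤ t.length ∧ 1 ≤ j ∧ j ≤ t.getD (i-1) 0 ∧
      x = tnode t i j ∧ y = tnode t i (j-1)) ∨
    (∃ i j, 1 ≤ i ∧ i ≤ t.length ∧ 1 ≤ j ∧ j < t.getD (i-1) 0 ∧ x = thiC i j ∧ y = e1) ∨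
    (∃ i, i ≤ p.length ∧ x = br i ∧ y = e2) ∨ (x = e1 ∧ y = e1) ∨ (x = e2 ∧ y = e2) := by
  rw [mem_River] at h
  rcases h with ⟨i,j,h1,h2,h3,h4,h5⟩|⟨i,j,h1,h2,h3,h4,h5⟩|⟨i,j,h1,h2,h3,h4,h5⟩|
    ⟨i,j,h1,h2,h3,h4,h5⟩|⟨i,h1,h5|h5⟩|(h5|h5|h5|h5|h5|h5)|⟨a,h1,h5⟩|(h5|h5)
  · exact absurd (congrArg Fct.rel h5) (by simp [f2, PyrR, ThiR])
  · exact Or.inl ⟨i, j, h1, h2, h3, h4, (f2_eq.1 h5).2.1, (f2_eq.1 h5).2.2⟩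
  · exact Or.inr (Or.inl ⟨i, j, h1, h2, h3, h4, (f2_eq.1 h5).2.1, (f2_eq.1 h5).2.2⟩)
  · exact absurd (congrArg Fct.rel h5) (by simp [f2, PyrR, ThiR])
  · exact Or.inr (Or.inr (Or.inl ⟨i, h1, (f2_eq.1 h5).2.1, (f2_eq.1 h5).2.2⟩))
  · exact absurd (congrArg Fct.rel h5) (by simp [f2, PyrR, ThiR])
  · exact absurd (congrArg Fct.rel h5) (by simp [f2, PyrR, ThiR])
  · exact Or.inr (Or.inr (Or.inr (Or.inl ⟨(f2_eq.1 h5).2.1, (f2_eq.1 h5).2.2⟩)))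
  · exact absurd (congrArg Fct.rel h5) (by simp [f2, ThiR, ChnR])
  · exact absurd (congrArg Fct.rel h5) (by simp [f2, PyrR, ThiR])
  · exact Or.inr (Or.inr (Or.inr (Or.inr ⟨(f2_eq.1 h5).2.1, (f2_eq.1 h5).2.2⟩)))
  · exact absurd (congrArg Fct.rel h5) (by simp [f2, ThiR, ChnR])
  · exact absurd (congrArg Fct.rel h5) (by simp [f2, ThiR, ChnR])
  · exact absurd (congrArg Fct.rel h5) (by simp [f2, ThiR, EncR])
  · exact absurd (congrArg Fct.rel h5) (by simp [f2, ThiR, MouthR])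

lemma riv_chn {p t : List ℕ} {x y : Term} (h : f2 ChnR x y ∈ River p t) :
    (x = chanC ∧ Worldly p t y) ∨ (x = e1 ∧ y = e1) ∨ (x = e2 ∧ y = e2) := by
  rw [mem_River] at h
  rcases h with ⟨i,j,h1,h2,h3,h4,h5⟩|⟨i,j,h1,h2,h3,h4,h5⟩|⟨i,j,h1,h2,h3,h4,h5⟩|
    ⟨i,j,h1,h2,h3,h4,h5⟩|⟨i,h1,h5|h5⟩|(h5|h5|h5|h5|h5|h5)|⟨a,h1,h5⟩|(h5|h5)
  · exact absurd (congrArg Fct.rel h5) (by simp [f2, ChnR, PyrR])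
  · exact absurd (congrArg Fct.rel h5) (by simp [f2, ChnR, ThiR])
  · exact absurd (congrArg Fct.rel h5) (by simp [f2, ChnR, ThiR])
  · exact absurd (congrArg Fct.rel h5) (by simp [f2, ChnR, PyrR])
  · exact absurd (congrArg Fct.rel h5) (by simp [f2, ChnR, ThiR])
  · exact absurd (congrArg Fct.rel h5) (by simp [f2, ChnR, PyrR])
  · exact absurd (congrArg Fct.rel h5) (by simp [f2, ChnR, PyrR])
  · exact absurd (congrArg Fct.rel h5) (by simp [f2, ChnR, ThiR])
  · exact Or.inr (Or.inl ⟨(f2_eq.1 h5).2.1, (f2_eq.1 h5).2.2⟩)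
  · exact absurd (congrArg Fct.rel h5) (by simp [f2, ChnR, PyrR])
  · exact absurd (congrArg Fct.rel h5) (by simp [f2, ChnR, ThiR])
  · exact Or.inr (Or.inr ⟨(f2_eq.1 h5).2.1, (f2_eq.1 h5).2.2⟩)
  · exact Or.inl ⟨(f2_eq.1 h5).2.1, (f2_eq.1 h5).2.2 ▸ h1⟩
  · exact absurd (congrArg Fct.rel h5) (by simp [f2, ChnR, EncR])
  · exact absurd (congrArg Fct.rel h5) (by simp [f2, ChnR, MouthR])

lemma riv_enc {p t : List ℕ} {x y : Term} (h : f2 EncR x y ∈ River p t) :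
    x = br p.length ∧ y = br (p.length - 1) := by
  rw [mem_River] at h
  rcases h with ⟨i,j,h1,h2,h3,h4,h5⟩|⟨i,j,h1,h2,h3,h4,h5⟩|⟨i,j,h1,h2,h3,h4,h5⟩|
    ⟨i,j,h1,h2,h3,h4,h5⟩|⟨i,h1,h5|h5⟩|(h5|h5|h5|h5|h5|h5)|⟨a,h1,h5⟩|(h5|h5)
  · exact absurd (congrArg Fct.rel h5) (by simp [f2, EncR, PyrR])
  · exact absurd (congrArg Fct.rel h5) (by simp [f2, EncR, ThiR])
  · exact absurd (congrArg Fct.rel h5) (by simp [f2, EncR, ThiR])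
  · exact absurd (congrArg Fct.rel h5) (by simp [f2, EncR, PyrR])
  · exact absurd (congrArg Fct.rel h5) (by simp [f2, EncR, ThiR])
  · exact absurd (congrArg Fct.rel h5) (by simp [f2, EncR, PyrR])
  · exact absurd (congrArg Fct.rel h5) (by simp [f2, EncR, PyrR])
  · exact absurd (congrArg Fct.rel h5) (by simp [f2, EncR, ThiR])
  · exact absurd (congrArg Fct.rel h5) (by simp [f2, EncR, ChnR])
  · exact absurd (congrArg Fct.rel h5) (by simp [f2, EncR, PyrR])
  · exact absurd (congrArg Fct.rel h5) (by simp [f2, EncR, ThiR])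
  · exact absurd (congrArg Fct.rel h5) (by simp [f2, EncR, ChnR])
  · exact absurd (congrArg Fct.rel h5) (by simp [f2, EncR, ChnR])
  · exact ⟨(f2_eq.1 h5).2.1, (f2_eq.1 h5).2.2⟩
  · exact absurd (congrArg Fct.rel h5) (by simp [f2, EncR, MouthR])

lemma riv_no_MR {p t : List ℕ} {f : Fct} (h : f ∈ River p t) : f.rel ≠ MR := by
  rw [mem_River] at h
  rcases h with ⟨i,j,h1,h2,h3,h4,h5⟩|⟨i,j,h1,h2,h3,h4,h5⟩|⟨i,j,h1,h2,h3,h4,h5⟩|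
    ⟨i,j,h1,h2,h3,h4,h5⟩|⟨i,h1,h5|h5⟩|(h5|h5|h5|h5|h5|h5)|⟨a,h1,h5⟩|(h5|h5) <;>
    subst h5 <;> simp [f2, PyrR, ThiR, ChnR, EncR, MouthR, MR]

lemma pnode_isConst (p : List ℕ) (i j : ℕ) : (pnode p i j).isConst := by
  unfold pnode; split_ifs <;> simp [br, pyrC, Term.isConst]

lemma tnode_isConst (t : List ℕ) (i j : ℕ) : (tnode t i j).isConst := by
  unfold tnode; split_ifs <;> simp [br, thiC, Term.isConst]

lemma worldly_isConst {p t : List ℕ} {a : Term} (h : Worldly p t a) : a.isConst := by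
  rcases h with ⟨i,_,rfl⟩|⟨i,j,_,_,_,_,rfl⟩|⟨i,j,_,_,_,_,rfl⟩ <;>
    simp [br, pyrC, thiC, Term.isConst]

lemma riv_const {p t : List ℕ} {f : Fct} (h : f ∈ River p t) : ∀ x ∈ f.args, x.isConst := by
  rw [mem_River] at h
  rcases h with ⟨i,j,h1,h2,h3,h4,h5⟩|⟨i,j,h1,h2,h3,h4,h5⟩|⟨i,j,h1,h2,h3,h4,h5⟩|
    ⟨i,j,h1,h2,h3,h4,h5⟩|⟨i,h1,h5|h5⟩|(h5|h5|h5|h5|h5|h5)|⟨a,h1,h5⟩|(h5|h5) <;>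
    subst h5 <;> intro x hx <;>
    simp only [f2, List.mem_cons, List.not_mem_nil, or_false] at hx
  all_goals try (rcases hx with rfl|rfl)
  all_goals try (rcases hx with rfl)
  all_goals first
    | exact pnode_isConst p i _
    | exact pnode_isConst p i _
    | exact tnode_isConst t i _
    | exact worldly_isConst h1
    | simp [br, pyrC, thiC, e1, e2, chanC, Term.isConst]

/-! ### Generic walks along the river -/

def gwalk (node : ℕ → ℕ → Term) (l : List ℕ) : ℕ → ℕ → Term
  | 0, _ => br 0
  | i+1, k => if k < l.getD i 0 then node (i+1) (l.getD i 0 - k) else gwalk node l i (k - l.getD i 0)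

/-- Partial sums of segment lengths. -/
def sS (l : List ℕ) (a b : ℕ) : ℕ := ∑ x ∈ Finset.Ico a b, l.getD x 0

lemma sS_succ_top {l : List ℕ} {a b : ℕ} (h : a ≤ b) : sS l a (b+1) = sS l a b + l.getD b 0 :=
  Finset.sum_Ico_succ_top h _

lemma sS_self (l : List ℕ) (a : ℕ) : sS l a a = 0 := by simp [sS]

lemma sS_consec {l : List ℕ} {a b c : ℕ} (h1 : a ≤ b) (h2 : b ≤ c) :
    sS l a b + sS l b c = sS l a c := Finset.sum_Ico_consecutive _ h1 h2

lemma sS_mono {l : List ℕ} {a a' b b' : ℕ} (h1 : a' ≤ a) (h2 : b ≤ b') :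
    sS l a b ≤ sS l a' b' := by
  apply Finset.sum_le_sum_of_subset
  intro x hx; simp only [Finset.mem_Ico] at *; omega

lemma sS_single_le {l : List ℕ} {a b x : ℕ} (h1 : a ≤ x) (h2 : x < b) :
    l.getD x 0 ≤ sS l a b := by
  apply Finset.single_le_sum (f := fun x => l.getD x 0) (fun _ _ => Nat.zero_le _)
  simp only [Finset.mem_Ico]; omega

section Walk

variable {node : ℕ → ℕ → Term} {l : List ℕ}

lemma gwalk_succ (node : ℕ → ℕ → Term) (l : List ℕ) (i k : ℕ) :
    gwalk node l (i+1) k =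
      if k < l.getD i 0 then node (i+1) (l.getD i 0 - k)
      else gwalk node l i (k - l.getD i 0) := rfl

lemma gwalk_zero' (node : ℕ → ℕ → Term) (l : List ℕ) (k : ℕ) : gwalk node l 0 k = br 0 := rfl

variable (hpos : ∀ i, i < l.length → 1 ≤ l.getD i 0)
variable (hzero : ∀ i, node (i+1) 0 = br i)
variable (hfull : ∀ i, i < l.length → node (i+1) (l.getD i 0) = br (i+1))

include hpos hfull in
lemma gwalk_zero : ∀ {i}, i ≤ l.length → gwalk node l i 0 = br i := by
  intro i hi
  cases i with
  | zero => rfl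
  | succ i =>
    have h1 : 1 ≤ l.getD i 0 := hpos i (by omega)
    rw [gwalk_succ, if_pos (by omega : (0:ℕ) < l.getD i 0), Nat.sub_zero]
    exact hfull i (by omega)

lemma gwalk_add {m : ℕ} : ∀ {i}, m ≤ i → ∀ d, gwalk node l i (sS l m i + d) = gwalk node l m d := by
  intro i
  induction i with
  | zero => intro h d; obtain rfl : m = 0 := by omega
            simp [sS_self]
  | succ i ih =>
    intro h d
    rcases Nat.eq_or_lt_of_le h with rfl|h'
    · simp [sS_self]
    · have hmi : m ≤ i := by omega
      rw [sS_succ_top hmi]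
      have heq : sS l m i + l.getD i 0 + d = l.getD i 0 + (sS l m i + d) := by ring
      rw [heq, gwalk_succ, if_neg (by omega : ¬ (l.getD i 0 + (sS l m i + d) < l.getD i 0)),
        Nat.add_sub_cancel_left]
      exact ih hmi d

include hpos hfull in
lemma gwalk_range : ∀ {i}, i ≤ l.length → ∀ {k}, k ≤ sS l 0 i →
    (∃ a b, 1 ≤ a ∧ a ≤ l.length ∧ 1 ≤ b ∧ b ≤ l.getD (a-1) 0 ∧ gwalk node l i k = node a b) ∨
    gwalk node l i k = br 0 := by
  intro i
  induction i with
  | zero => intro _ k hk; exact Or.inr rfl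
  | succ i ih =>
    intro hi k hk
    by_cases hlt : k < l.getD i 0
    · left
      refine ⟨i+1, l.getD i 0 - k, by omega, hi, by omega, by simp, ?_⟩
      rw [gwalk_succ, if_pos hlt]
    · have hs : sS l 0 (i+1) = sS l 0 i + l.getD i 0 := sS_succ_top (by omega)
      rw [gwalk_succ, if_neg hlt]
      exact ih (by omega) (by omega)

include hpos hzero hfull in
lemma gwalk_edge {P : Term → Term → Prop}
    (hedge : ∀ a b, 1 ≤ a → a ≤ l.length → 1 ≤ b → b ≤ l.getD (a-1) 0 →
      P (node a b) (node a (b-1))) :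
    ∀ {i}, i ≤ l.length → ∀ {k}, k + 1 ≤ sS l 0 i →
      P (gwalk node l i k) (gwalk node l i (k+1)) := by
  intro i
  induction i with
  | zero => intro _ k hk; simp [sS_self] at hk
  | succ i ih =>
    intro hi k hk
    by_cases hlt : k < l.getD i 0
    · have h1 := hedge (i+1) (l.getD i 0 - k) (by omega) hi (by omega) (by simp)
      rw [gwalk_succ, if_pos hlt]
      by_cases hlt2 : k + 1 < l.getD i 0
      · rw [gwalk_succ, if_pos hlt2]
        rw [show l.getD i 0 - (k+1) = l.getD i 0 - k - 1 by omega]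
        exact h1
      · have hk1 : k + 1 = l.getD i 0 := by omega
        rw [gwalk_succ, if_neg (by omega : ¬ (k+1 < l.getD i 0)), hk1, Nat.sub_self,
          gwalk_zero hpos hfull (by omega)]
        rw [show l.getD i 0 - k - 1 = 0 by omega] at h1
        rwa [hzero i] at h1
    · have hs : sS l 0 (i+1) = sS l 0 i + l.getD i 0 := sS_succ_top (by omega)
      rw [gwalk_succ, if_neg hlt, gwalk_succ, if_neg (by omega : ¬ (k+1 < l.getD i 0))]
      rw [show k + 1 - l.getD i 0 = (k - l.getD i 0) + 1 by omega]
      exact ih (by omega) (by omega)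

variable (hclass : ∀ a b c, 1 ≤ a → a ≤ l.length → 1 ≤ b → b ≤ l.getD (a-1) 0 →
  node a b = br c → c = a ∧ b = l.getD (a-1) 0)

include hpos hclass in
lemma gwalk_br : ∀ {i}, i ≤ l.length → ∀ {k c}, k ≤ sS l 0 i → gwalk node l i k = br c →
    c ≤ i ∧ k = sS l c i := by
  intro i
  induction i with
  | zero =>
    intro _ k c hk hw
    rw [gwalk_zero'] at hw
    obtain rfl : 0 = c := br_inj hw
    have hk0 : k = 0 := by simpa [sS_self] using hk
    simp [hk0, sS_self]
  | succ i ih =>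
    intro hi k c hk hw
    by_cases hlt : k < l.getD i 0
    · rw [gwalk_succ, if_pos hlt] at hw
      obtain ⟨hc, hb⟩ := hclass (i+1) (l.getD i 0 - k) c (by omega) hi (by omega) (by simp) hw
      simp only [Nat.add_sub_cancel] at hb
      obtain rfl : k = 0 := by omega
      subst hc
      simp [sS_self]
    · rw [gwalk_succ, if_neg hlt] at hw
      have hs : sS l 0 (i+1) = sS l 0 i + l.getD i 0 := sS_succ_top (by omega)
      obtain ⟨hc, hb⟩ := ih (by omega) (by omega) hw
      refine ⟨by omega, ?_⟩
      rw [sS_succ_top (by omega : c ≤ i)]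
      omega

variable (hinj : ∀ a b a' b', 1 ≤ a → a ≤ l.length → 1 ≤ b → b ≤ l.getD (a-1) 0 →
  1 ≤ a' → a' ≤ l.length → 1 ≤ b' → b' ≤ l.getD (a'-1) 0 →
  node a b = node a' b' → a = a' ∧ b = b')

include hpos hzero hfull hinj in
lemma gwalk_det : ∀ {i}, i ≤ l.length → ∀ {k}, k + 1 ≤ sS l 0 i →
    ∀ {a b}, 1 ≤ a → a ≤ l.length → 1 ≤ b → b ≤ l.getD (a-1) 0 →
    gwalk node l i k = node a b → gwalk node l i (k+1) = node a (b-1) := by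
  intro i
  induction i with
  | zero => intro _ k hk; simp [sS_self] at hk
  | succ i ih =>
    intro hi k hk a b ha1 ha2 hb1 hb2 hw
    by_cases hlt : k < l.getD i 0
    · rw [gwalk_succ, if_pos hlt] at hw
      obtain ⟨rfl, rfl⟩ := (hinj _ _ _ _ ha1 ha2 hb1 hb2 (by omega) hi (by omega) (by simp)
        hw.symm)
      by_cases hlt2 : k + 1 < l.getD i 0
      · rw [gwalk_succ, if_pos hlt2,
          show l.getD i 0 - (k+1) = l.getD i 0 - k - 1 from by omega]
      · have hk1 : k + 1 = l.getD i 0 := by omega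
        rw [gwalk_succ, if_neg (by omega : ¬ (k+1 < l.getD i 0)), hk1, Nat.sub_self,
          gwalk_zero hpos hfull (by omega)]
        rw [show l.getD i 0 - k - 1 = 0 by omega, hzero i]
    · rw [gwalk_succ, if_neg hlt] at hw
      have hs : sS l 0 (i+1) = sS l 0 i + l.getD i 0 := sS_succ_top (by omega)
      rw [gwalk_succ, if_neg (by omega : ¬ (k+1 < l.getD i 0))]
      rw [show k + 1 - l.getD i 0 = (k - l.getD i 0) + 1 by omega]
      exact ih (by omega) (by omega) ha1 ha2 hb1 hb2 hw

end Walk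

/-! ### Instantiation of the generic walk for the Pyramus and Thisbe paths -/

lemma listpos {l : List ℕ} (hl : ∀ x ∈ l, 1 ≤ x) : ∀ i, i < l.length → 1 ≤ l.getD i 0 :=
  fun i hi => by rw [List.getD_eq_getElem l 0 hi]; exact hl _ (List.getElem_mem hi)

lemma pnode_zero (p : List ℕ) : ∀ i, pnode p (i+1) 0 = br i := by simp [pnode]

lemma pnode_eval {p : List ℕ} {a b : ℕ} (h3 : 1 ≤ b) :
    pnode p a b = if b = p.getD (a-1) 0 then br a else pyrC a b := by
  simp only [pnode]
  rw [if_neg (by omega)]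

lemma pnode_full {p : List ℕ} (hp : ∀ x ∈ p, 1 ≤ x) :
    ∀ i, i < p.length → pnode p (i+1) (p.getD i 0) = br (i+1) := by
  intro i hi
  have := listpos hp i hi
  rw [pnode_eval (by omega)]
  simp

lemma pnode_class (p : List ℕ) : ∀ a b c, 1 ≤ a → a ≤ p.length → 1 ≤ b → b ≤ p.getD (a-1) 0 →
    pnode p a b = br c → c = a ∧ b = p.getD (a-1) 0 := by
  intro a b c h1 h2 h3 h4 h5
  rw [pnode_eval h3] at h5
  split_ifs at h5 with hb
  · exact ⟨(br_inj h5).symm, hb⟩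
  · exact absurd h5 (by simp [pyrC, br])

lemma pnode_inj (p : List ℕ) : ∀ a b a' b', 1 ≤ a → a ≤ p.length → 1 ≤ b → b ≤ p.getD (a-1) 0 →
    1 ≤ a' → a' ≤ p.length → 1 ≤ b' → b' ≤ p.getD (a'-1) 0 →
    pnode p a b = pnode p a' b' → a = a' ∧ b = b' := by
  intro a b a' b' h1 h2 h3 h4 h1' h2' h3' h4' h5
  rw [pnode_eval h3, pnode_eval h3'] at h5
  split_ifs at h5 with hb hb' hb'
  · obtain rfl := br_inj h5; omega
  · exact absurd h5 (by simp [pyrC, br])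
  · exact absurd h5 (by simp [pyrC, br])
  · simp only [pyrC, constPair_eq, Nat.pair_eq_pair] at h5
    exact ⟨h5.2.1, h5.2.2⟩

lemma tnode_zero (t : List ℕ) : ∀ i, tnode t (i+1) 0 = br i := by simp [tnode]

lemma tnode_eval {t : List ℕ} {a b : ℕ} (h3 : 1 ≤ b) :
    tnode t a b = if b = t.getD (a-1) 0 then br a else thiC a b := by
  simp only [tnode]
  rw [if_neg (by omega)]

lemma tnode_full {t : List ℕ} (ht : ∀ x ∈ t, 1 ≤ x) :
    ∀ i, i < t.length → tnode t (i+1) (t.getD i 0) = br (i+1) := by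
  intro i hi
  have := listpos ht i hi
  rw [tnode_eval (by omega)]
  simp

lemma tnode_class (t : List ℕ) : ∀ a b c, 1 ≤ a → a ≤ t.length → 1 ≤ b → b ≤ t.getD (a-1) 0 →
    tnode t a b = br c → c = a ∧ b = t.getD (a-1) 0 := by
  intro a b c h1 h2 h3 h4 h5
  rw [tnode_eval h3] at h5
  split_ifs at h5 with hb
  · exact ⟨(br_inj h5).symm, hb⟩
  · exact absurd h5 (by simp [thiC, br])

lemma tnode_inj (t : List ℕ) : ∀ a b a' b', 1 ≤ a → a ≤ t.length → 1 ≤ b → b ≤ t.getD (a-1) 0 →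
    1 ≤ a' → a' ≤ t.length → 1 ≤ b' → b' ≤ t.getD (a'-1) 0 →
    tnode t a b = tnode t a' b' → a = a' ∧ b = b' := by
  intro a b a' b' h1 h2 h3 h4 h1' h2' h3' h4' h5
  rw [tnode_eval h3, tnode_eval h3'] at h5
  split_ifs at h5 with hb hb' hb'
  · obtain rfl := br_inj h5; omega
  · exact absurd h5 (by simp [thiC, br])
  · exact absurd h5 (by simp [thiC, br])
  · simp only [thiC, constPair_eq, Nat.pair_eq_pair] at h5
    exact ⟨h5.2.1, h5.2.2⟩

lemma worldly_br {p t : List ℕ} {i : ℕ} (h : i ≤ p.length) : Worldly p t (br i) :=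
  Or.inl ⟨i, h, rfl⟩

lemma worldly_pnode {p t : List ℕ} {a b : ℕ} (h1 : 1 ≤ a) (h2 : a ≤ p.length) (h3 : 1 ≤ b)
    (h4 : b ≤ p.getD (a-1) 0) : Worldly p t (pnode p a b) := by
  simp only [pnode]
  rw [if_neg (by omega)]
  by_cases hb : b = p.getD (a-1) 0
  · rw [if_pos hb]; exact worldly_br h2
  · rw [if_neg hb]; exact Or.inr (Or.inl ⟨a, b, h1, h2, h3, by omega, rfl⟩)

lemma worldly_tnode {p t : List ℕ} (hlen : p.length = t.length) {a b : ℕ} (h1 : 1 ≤ a)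
    (h2 : a ≤ t.length) (h3 : 1 ≤ b) (h4 : b ≤ t.getD (a-1) 0) : Worldly p t (tnode t a b) := by
  rw [tnode_eval h3]
  split_ifs with hb
  · exact worldly_br (by omega)
  · exact Or.inr (Or.inr ⟨a, b, h1, h2, h3, by omega, rfl⟩)

lemma worldly_not_e {p t : List ℕ} {x : Term} (h : Worldly p t x) :
    x ≠ e1 ∧ x ≠ e2 ∧ x ≠ chanC := by
  rcases h with ⟨i,_,rfl⟩|⟨i,j,_,_,_,_,rfl⟩|⟨i,j,_,_,_,_,rfl⟩ <;>
    refine ⟨?_, ?_, ?_⟩ <;> simp [br, pyrC, thiC, e1, e2, chanC]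

lemma pnode_ne_e {p : List ℕ} {a b : ℕ} : pnode p a b ≠ e1 ∧ pnode p a b ≠ e2 := by
  constructor <;> (simp only [pnode]; split_ifs <;> simp [br, pyrC, e1, e2])

lemma tnode_ne_e {t : List ℕ} {a b : ℕ} : tnode t a b ≠ e1 ∧ tnode t a b ≠ e2 := by
  constructor <;> (simp only [tnode]; split_ifs <;> simp [br, thiC, e1, e2])

/-! ### Sums under synchronisation -/

lemma sync_sum {p t : List ℕ} {m n a : ℕ}
    (hs : ∀ idx, m ≤ idx → idx + 1 < n → t.getD idx 0 = p.getD (idx+1) 0)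
    (hn : 1 ≤ n) (ha : m ≤ a) :
    ∀ b, a ≤ b → b ≤ n - 1 → sS t a b = sS p (a+1) (b+1) := by
  intro b hab
  induction b, hab using Nat.le_induction with
  | base => intro _; simp [sS_self]
  | succ b hab ih =>
    intro hb
    rw [sS_succ_top hab, sS_succ_top (by omega : a + 1 ≤ b + 1), ih (by omega),
      hs b (by omega) (by omega)]

/-! ### The forward combinatorial core: no infinite synchronised walk exists -/

lemma no_walks {p t : List ℕ} (hlen : p.length = t.length) (hn : 1 ≤ p.length)
    (hp : ∀ x ∈ p, 1 ≤ x) (ht : ∀ x ∈ t, 1 ≤ x)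
    (hsync : ∀ idx, idx + 1 < p.length → t.getD idx 0 = p.getD (idx+1) 0)
    (a b : ℕ → Term) (ha0 : a 0 = br p.length) (hb0 : b 0 = br (p.length - 1))
    (hPyr : ∀ k, f2 PyrR (a k) (a (k+1)) ∈ River p t)
    (hThi : ∀ k, f2 ThiR (b k) (b (k+1)) ∈ River p t)
    (hChn : ∀ k, ∃ γ, f2 ChnR γ (a (k+1)) ∈ River p t ∧ f2 ChnR γ (b (k+1)) ∈ River p t) :
    False := by
  obtain ⟨n', hnn⟩ : ∃ n', p.length = n' + 1 := ⟨p.length - 1, by omega⟩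
  have hts : t.length = n' + 1 := by omega
  have Ppos := listpos hp
  have Tpos := listpos ht
  have pzero := pnode_zero p
  have pfull := pnode_full hp
  have pclass := pnode_class p
  have pinj := pnode_inj p
  have tzero := tnode_zero t
  have tfull := tnode_full ht
  have tclass := tnode_class t
  have tinj := tnode_inj t
  have hT0p : sS t 0 n' = sS p 1 p.length := by
    rw [sync_sum (m := 0) (n := p.length) (fun idx _ h2 => hsync idx h2) hn (by omega)
      n' (by omega) (by omega)]
    congr 1
    omega
  have hmono : sS p 1 p.length ≤ sS p 0 p.length := sS_mono (by omega) (le_refl _)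
  have tri : ∀ k, (Worldly p t (a (k+1)) ∧ Worldly p t (b (k+1))) ∨
      (a (k+1) = e1 ∧ b (k+1) = e1) ∨ (a (k+1) = e2 ∧ b (k+1) = e2) := by
    intro k
    obtain ⟨γ, hca, hcb⟩ := hChn k
    rcases riv_chn hca with ⟨hγ1, hwa⟩|⟨hγ1, hae⟩|⟨hγ1, hae⟩ <;>
      rcases riv_chn hcb with ⟨hγ2, hwb⟩|⟨hγ2, hbe⟩|⟨hγ2, hbe⟩
    · exact Or.inl ⟨hwa, hwb⟩
    · exact absurd (hγ1.symm.trans hγ2) (by simp [chanC, e1])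
    · exact absurd (hγ1.symm.trans hγ2) (by simp [chanC, e2])
    · exact absurd (hγ1.symm.trans hγ2) (by simp [chanC, e1])
    · exact Or.inr (Or.inl ⟨hae, hbe⟩)
    · exact absurd (hγ1.symm.trans hγ2) (by simp [e1, e2])
    · exact absurd (hγ1.symm.trans hγ2) (by simp [chanC, e2])
    · exact absurd (hγ1.symm.trans hγ2) (by simp [e1, e2])
    · exact Or.inr (Or.inr ⟨hae, hbe⟩)
  -- the walks are forced up to time T0 = sS t 0 n'
  have forced : ∀ k, k ≤ sS t 0 n' →
      a k = gwalk (pnode p) p p.length k ∧ b k = gwalk (tnode t) t n' k := by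
    intro k
    induction k with
    | zero =>
      intro _
      refine ⟨by rw [ha0, gwalk_zero Ppos pfull (le_refl _)], ?_⟩
      rw [hb0, gwalk_zero Tpos tfull (show n' ≤ t.length by omega)]
      congr 1
      omega
    | succ k ih =>
      intro hk1
      obtain ⟨hak, hbk⟩ := ih (by omega)
      have hkp : k + 1 ≤ sS p 0 p.length := by omega
      have hkt : k + 1 ≤ sS t 0 n' := hk1
      have hrangeA := gwalk_range Ppos pfull (le_refl p.length) (k := k) (by omega)
      have hrangeB := gwalk_range Tpos tfull (show n' ≤ t.length by omega) (k := k) (by omega)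
      have haDist : a k ≠ e1 ∧ a k ≠ e2 := by
        rw [hak]
        rcases hrangeA with ⟨aa,bb,_,_,_,_,heq⟩|heq <;> rw [heq]
        · exact pnode_ne_e
        · constructor <;> simp [br, e1, e2]
      have hbDist : b k ≠ e1 ∧ b k ≠ e2 := by
        rw [hbk]
        rcases hrangeB with ⟨aa,bb,_,_,_,_,heq⟩|heq <;> rw [heq]
        · exact tnode_ne_e
        · constructor <;> simp [br, e1, e2]
      rcases tri k with ⟨hwa, hwb⟩|⟨hae, hbe⟩|⟨hae, hbe⟩
      · -- both worldly : the walks advance deterministically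
        constructor
        · rcases riv_pyr (hPyr k) with ⟨i,j,h1,h2,h3,h4,hx,hy⟩|⟨i,j,h1,h2,h3,h4,hx,hy⟩|
            ⟨i,h1,hx,hy⟩|⟨hx,hy⟩|⟨hx,hy⟩
          · rw [hy]
            exact (gwalk_det Ppos pzero pfull pinj (le_refl _) hkp h1 h2 h3 h4
              (hak.symm.trans hx)).symm
          · exact absurd hy (worldly_not_e hwa).2.1
          · exact absurd hy (worldly_not_e hwa).1
          · exact absurd hx haDist.1
          · exact absurd hx haDist.2
        · rcases riv_thi (hThi k) with ⟨i,j,h1,h2,h3,h4,hx,hy⟩|⟨i,j,h1,h2,h3,h4,hx,hy⟩|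
            ⟨i,h1,hx,hy⟩|⟨hx,hy⟩|⟨hx,hy⟩
          · rw [hy]
            exact (gwalk_det Tpos tzero tfull tinj (show n' ≤ t.length by omega) hkt h1 h2 h3 h4
              (hbk.symm.trans hx)).symm
          · exact absurd hy (worldly_not_e hwb).1
          · exact absurd hy (worldly_not_e hwb).2.1
          · exact absurd hx hbDist.1
          · exact absurd hx hbDist.2
      · -- both escape to e1 : impossible before time T0
        exfalso
        have hax : ∃ i, i ≤ p.length ∧ a k = br i := by
          rcases riv_pyr (hPyr k) with ⟨i,j,h1,h2,h3,h4,hx,hy⟩|⟨i,j,h1,h2,h3,h4,hx,hy⟩|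
            ⟨i,h1,hx,hy⟩|⟨hx,hy⟩|⟨hx,hy⟩
          · exact absurd (hy.symm.trans hae) pnode_ne_e.1
          · exact absurd (hy.symm.trans hae) (by simp [e1, e2])
          · exact ⟨i, h1, hx⟩
          · exact absurd hx haDist.1
          · exact absurd hx haDist.2
        obtain ⟨i, hile, hax⟩ := hax
        obtain ⟨hi2, hkeq⟩ := gwalk_br Ppos pclass (le_refl _)
          (show k ≤ sS p 0 p.length by omega) (hak.symm.trans hax)
        have hi1 : 1 ≤ i := by
          rcases Nat.eq_zero_or_pos i with rfl|h
          · omega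
          · exact h
        have hkt' : k = sS t (i-1) n' := by
          rw [sync_sum (m := 0) (n := p.length) (fun idx _ h2 => hsync idx h2) hn (by omega)
            n' (by omega) (by omega), show i - 1 + 1 = i by omega,
            show n' + 1 = p.length by omega]
          exact hkeq
        have hbbr : b k = br (i-1) := by
          rw [hbk, hkt', show sS t (i-1) n' = sS t (i-1) n' + 0 by omega,
            gwalk_add (show i - 1 ≤ n' by omega) 0,
            gwalk_zero Tpos tfull (show i - 1 ≤ t.length by omega)]
        rcases riv_thi (hThi k) with ⟨i',j',h1,h2,h3,h4,hx,hy⟩|⟨i',j',h1,h2,h3,h4,hx,hy⟩|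
          ⟨i',h1,hx,hy⟩|⟨hx,hy⟩|⟨hx,hy⟩
        · exact absurd (hy.symm.trans hbe) tnode_ne_e.1
        · exact absurd (hbbr.symm.trans hx) (by simp [br, thiC])
        · exact absurd (hy.symm.trans hbe) (by simp [e1, e2])
        · exact absurd hx hbDist.1
        · exact absurd hx hbDist.2
      · -- both escape to e2 : impossible before time T0
        exfalso
        have hbx : ∃ i, b k = br i := by
          rcases riv_thi (hThi k) with ⟨i',j',h1,h2,h3,h4,hx,hy⟩|⟨i',j',h1,h2,h3,h4,hx,hy⟩|
            ⟨i',h1,hx,hy⟩|⟨hx,hy⟩|⟨hx,hy⟩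
          · exact absurd (hy.symm.trans hbe) tnode_ne_e.2
          · exact absurd (hy.symm.trans hbe) (by simp [e1, e2])
          · exact ⟨i', hx⟩
          · exact absurd hx hbDist.1
          · exact absurd hx hbDist.2
        obtain ⟨i, hbx⟩ := hbx
        obtain ⟨hi2, hkeq⟩ := gwalk_br Tpos tclass (show n' ≤ t.length by omega)
          (show k ≤ sS t 0 n' by omega) (hbk.symm.trans hbx)
        have hkp' : k = sS p (i+1) p.length := by
          have hs2 : sS t i n' = sS p (i+1) (n'+1) :=
            sync_sum (m := 0) (n := p.length) (fun idx _ h2 => hsync idx h2) hn (by omega)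
              n' hi2 (by omega)
          rw [show (n' : ℕ) + 1 = p.length from by omega] at hs2
          omega
        have habr : a k = br (i+1) := by
          rw [hak, hkp', show sS p (i+1) p.length = sS p (i+1) p.length + 0 by omega,
            gwalk_add (show i + 1 ≤ p.length by omega) 0,
            gwalk_zero Ppos pfull (show i + 1 ≤ p.length by omega)]
        rcases riv_pyr (hPyr k) with ⟨i',j',h1,h2,h3,h4,hx,hy⟩|⟨i',j',h1,h2,h3,h4,hx,hy⟩|
          ⟨i',h1,hx,hy⟩|⟨hx,hy⟩|⟨hx,hy⟩
        · exact absurd (hy.symm.trans hae) pnode_ne_e.2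
        · exact absurd (habr.symm.trans hx) (by simp [br, pyrC])
        · exact absurd (hy.symm.trans hae) (by simp [e1, e2])
        · exact absurd hx haDist.1
        · exact absurd hx haDist.2
  -- endgame : at time T0 the Thisbe walk sits at b₀ and must jump to e₂,
  -- while the Pyramus walk sits at the bridge b₁.
  obtain ⟨haT, hbT⟩ := forced (sS t 0 n') (le_refl _)
  have hbT0 : b (sS t 0 n') = br 0 := by
    rw [hbT, show sS t 0 n' = sS t 0 n' + 0 by omega, gwalk_add (Nat.zero_le n') 0]
    rfl
  have haT0 : a (sS t 0 n') = br 1 := by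
    rw [haT, hT0p, show sS p 1 p.length = sS p 1 p.length + 0 by omega,
      gwalk_add hn 0, gwalk_zero Ppos pfull hn]
  have hbe2 : b (sS t 0 n' + 1) = e2 := by
    rcases riv_thi (hThi (sS t 0 n')) with ⟨i',j',h1,h2,h3,h4,hx,hy⟩|⟨i',j',h1,h2,h3,h4,hx,hy⟩|
      ⟨i',h1,hx,hy⟩|⟨hx,hy⟩|⟨hx,hy⟩
    · obtain ⟨hc, -⟩ := tnode_class t i' j' 0 h1 h2 h3 h4 (hx.symm.trans hbT0)
      omega
    · exact absurd (hbT0.symm.trans hx) (by simp [br, thiC])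
    · exact hy
    · exact absurd (hbT0.symm.trans hx) (by simp [br, e1])
    · exact absurd (hbT0.symm.trans hx) (by simp [br, e2])
  have hae2 : a (sS t 0 n' + 1) = e2 := by
    obtain ⟨γ, hca, hcb⟩ := hChn (sS t 0 n')
    rw [hbe2] at hcb
    rcases riv_chn hcb with ⟨hγ1, hw⟩|⟨hγ1, h⟩|⟨hγ1, -⟩
    · exact absurd rfl (worldly_not_e hw).2.1
    · exact absurd h (by simp [e1, e2])
    · subst hγ1
      rcases riv_chn hca with ⟨hγ1, hw⟩|⟨hγ1, h⟩|⟨-, h⟩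
      · exact absurd hγ1 (by simp [chanC, e2])
      · exact absurd hγ1 (by simp [e1, e2])
      · exact h
  rcases riv_pyr (hPyr (sS t 0 n')) with ⟨i',j',h1,h2,h3,h4,hx,hy⟩|⟨i',j',h1,h2,h3,h4,hx,hy⟩|
    ⟨i',h1,hx,hy⟩|⟨hx,hy⟩|⟨hx,hy⟩
  · exact absurd (hy.symm.trans hae2) pnode_ne_e.2
  · exact absurd (haT0.symm.trans hx) (by simp [br, pyrC])
  · exact absurd (hy.symm.trans hae2) (by simp [e1, e2])
  · exact absurd (haT0.symm.trans hx) (by simp [br, e1])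
  · exact absurd (haT0.symm.trans hx) (by simp [br, e2])

/-! ### Generic facts about chase results -/

lemma chaseStep_mono {T : List TGD} {I J : Inst} (h : ChaseStep T I J) : I ⊆ J := by
  obtain ⟨t, -, c, -, s, -, -, -, rfl⟩ := h
  exact Set.subset_union_left

lemma chaseSeq_mono {T : List TGD} {I : Inst} {f : ℕ → Inst} (hs : IsChaseSeq T I f) :
    ∀ i j, i ≤ j → f i ⊆ f j := by
  intro i j hij
  induction j with
  | zero => obtain rfl : i = 0 := by omega
            exact subset_rfl
  | succ j ih =>
    rcases Nat.eq_or_lt_of_le hij with rfl|hlt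
    · exact subset_rfl
    · have h1 : f i ⊆ f j := ih (by omega)
      rcases (hs.2 j) with hstep|⟨-, heq⟩
      · exact h1.trans (chaseStep_mono hstep)
      · rw [heq]; exact h1

lemma body_in_stage {f : ℕ → Inst} (mono : ∀ i j, i ≤ j → f i ⊆ f j) (L : List Atom)
    (g : ℕ → Term) (h : ∀ a ∈ L, a.inst g ∈ ⋃ i, f i) : ∃ i, ∀ a ∈ L, a.inst g ∈ f i := by
  induction L with
  | nil => exact ⟨0, by simp⟩
  | cons a L ih =>
    obtain ⟨i0, hi0⟩ := Set.mem_iUnion.1 (h a (by simp))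
    obtain ⟨i1, hi1⟩ := ih (fun a ha => h a (by simp [ha]))
    refine ⟨max i0 i1, fun a' ha' => ?_⟩
    rcases List.mem_cons.1 ha' with rfl|ha'
    · exact mono i0 _ (le_max_left _ _) hi0
    · exact mono i1 _ (le_max_right _ _) (hi1 a' ha')

lemma chaseResult_sup {T : List TGD} {I J : Inst} (h : IsChaseResult T I J) : I ⊆ J := by
  obtain ⟨f, hseq, -, rfl⟩ := h
  rw [← hseq.1]
  exact Set.subset_iUnion f 0

lemma chaseResult_model {T : List TGD} {I J : Inst} (h : IsChaseResult T I J) : IsModel J T := by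
  obtain ⟨f, hseq, hfair, rfl⟩ := h
  have mono := chaseSeq_mono hseq
  intro t ht g hg
  obtain ⟨i, hi⟩ := body_in_stage mono t.body g hg
  by_cases happ : t.Applicable (f i) (t.frontier.map g)
  · obtain ⟨j, hij, hcase⟩ := hfair i t ht _ happ
    rcases hcase with ⟨-, s, hmap, -, -, hres⟩|hnapp
    · refine ⟨s, fun a ha => ?_, mapEqOn hmap⟩
      refine Set.mem_iUnion.2 ⟨j+1, ?_⟩
      rw [hres]
      exact Set.mem_union_right _ ⟨a, ha, rfl⟩
    · rw [TGD.Applicable, not_and_or, not_not] at hnapp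
      rcases hnapp with hpos|⟨s, hh, hmap⟩
      · exact absurd ⟨g, fun a ha => mono i j hij (hi a ha), rfl⟩ hpos
      · exact ⟨s, fun a ha => Set.mem_iUnion.2 ⟨j, hh a ha⟩, mapEqOn hmap⟩
  · rw [TGD.Applicable, not_and_or, not_not] at happ
    rcases happ with hpos|⟨s, hh, hmap⟩
    · exact absurd ⟨g, hi, rfl⟩ hpos
    · exact ⟨s, fun a ha => Set.mem_iUnion.2 ⟨i, hh a ha⟩, mapEqOn hmap⟩

/-! ### Iteration with choice -/

def iterChoice {α : Type*} (z : α) (F : α → α) : ℕ → α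
  | 0 => z
  | k+1 => F (iterChoice z F k)

/-! ### The forward direction: no hom back when the river is fully synchronised -/

lemma f2_map (h : Term → Term) (R : RelSym) (x y : Term) :
    (f2 R x y).map h = f2 R (h x) (h y) := rfl

lemma dbp_br {h : Term → Term} (hdb : DBPres h) (i : ℕ) : h (br i) = br i := hdb _

lemma forward_no_hom {p t : List ℕ} (hlen : p.length = t.length) (hn : 1 ≤ p.length)
    (hp : ∀ x ∈ p, 1 ≤ x) (ht : ∀ x ∈ t, 1 ≤ x)
    (hsync : ∀ idx, idx + 1 < p.length → t.getD idx 0 = p.getD (idx+1) 0)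
    {J : Inst} (hJR : River p t ⊆ J) (hmod : IsModel J Tmyth)
    {h : Term → Term} (hdb : DBPres h) (hhom : IsHomOn SQmyth h J (River p t)) : False := by
  classical
  have hm1 : TGD.Satisfies J ⟨[⟨EncR, [0, 1]⟩], [⟨MR, [0, 2, 3, 4, 1]⟩], [0, 1]⟩ :=
    hmod _ (by simp [Tmyth])
  have hm2 : TGD.Satisfies J ⟨[⟨MR, [0, 1, 2, 3, 4]⟩], [⟨MR, [1, 5, 6, 7, 3]⟩], [1, 3]⟩ :=
    hmod _ (by simp [Tmyth])
  have hm3 : TGD.Satisfies J ⟨[⟨MR, [0, 1, 2, 3, 4]⟩],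
      [⟨PyrR, [0, 1]⟩, ⟨ThiR, [4, 3]⟩, ⟨ChnR, [2, 1]⟩, ⟨ChnR, [2, 3]⟩], [0, 1, 2, 3, 4]⟩ :=
    hmod _ (by simp [Tmyth])
  -- start of the chain
  obtain ⟨h0, hhead0, hfr0⟩ := hm1 (fun x => [br p.length, br (p.length - 1)].getD x e1)
    (by
      intro a ha
      rw [List.mem_singleton] at ha
      subst ha
      exact hJR riv_enc_mem)
  have h00 : h0 0 = br p.length := hfr0 0 (by simp)
  have h01 : h0 1 = br (p.length - 1) := hfr0 1 (by simp)
  have h0fact : (⟨MR, [h0 0, h0 2, h0 3, h0 4, h0 1]⟩ : Fct) ∈ J :=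
    hhead0 ⟨MR, [0, 2, 3, 4, 1]⟩ (by simp)
  rw [h00, h01] at h0fact
  -- the chain step
  have hstep : ∀ v : {v : Term × Term × Term × Term × Term //
      (⟨MR, [v.1, v.2.1, v.2.2.1, v.2.2.2.1, v.2.2.2.2]⟩ : Fct) ∈ J},
      ∃ w : {w : Term × Term × Term × Term × Term //
        (⟨MR, [w.1, w.2.1, w.2.2.1, w.2.2.2.1, w.2.2.2.2]⟩ : Fct) ∈ J},
      w.1.1 = v.1.2.1 ∧ w.1.2.2.2.2 = v.1.2.2.2.1 := by
    rintro ⟨⟨v1, v2, v3, v4, v5⟩, hv⟩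
    obtain ⟨h2, hh2, hf2⟩ := hm2 (fun x => [v1, v2, v3, v4, v5].getD x e1)
      (by
        intro a ha
        rw [List.mem_singleton] at ha
        subst ha
        exact hv)
    have hfa : (⟨MR, [h2 1, h2 5, h2 6, h2 7, h2 3]⟩ : Fct) ∈ J :=
      hh2 ⟨MR, [1, 5, 6, 7, 3]⟩ (by simp)
    exact ⟨⟨(h2 1, h2 5, h2 6, h2 7, h2 3), hfa⟩, hf2 1 (by simp), hf2 3 (by simp)⟩
  choose stepF hstepA hstepB using hstep
  let W : ℕ → {v : Term × Term × Term × Term × Term //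
      (⟨MR, [v.1, v.2.1, v.2.2.1, v.2.2.2.1, v.2.2.2.2]⟩ : Fct) ∈ J} :=
    iterChoice ⟨(br p.length, h0 2, h0 3, h0 4, br (p.length - 1)), h0fact⟩ stepF
  have hWsucc : ∀ k, W (k+1) = stepF (W k) := fun _ => rfl
  have hlinkU : ∀ k, (W (k+1)).1.1 = (W k).1.2.1 := fun k => by
    rw [hWsucc k]; exact hstepA _
  have hlinkV : ∀ k, (W (k+1)).1.2.2.2.2 = (W k).1.2.2.2.1 := fun k => by
    rw [hWsucc k]; exact hstepB _
  have hW0U : (W 0).1.1 = br p.length := rfl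
  have hW0V : (W 0).1.2.2.2.2 = br (p.length - 1) := rfl
  -- the derived Pyramus/Thisbe/Channel facts of the chain
  have hfacts : ∀ k, f2 PyrR ((W k).1.1) ((W (k+1)).1.1) ∈ J ∧
      f2 ThiR ((W k).1.2.2.2.2) ((W (k+1)).1.2.2.2.2) ∈ J ∧
      f2 ChnR ((W k).1.2.2.1) ((W (k+1)).1.1) ∈ J ∧
      f2 ChnR ((W k).1.2.2.1) ((W (k+1)).1.2.2.2.2) ∈ J := by
    intro k
    obtain ⟨h3, hh3, hf3⟩ := hm3 (fun x => [(W k).1.1, (W k).1.2.1, (W k).1.2.2.1,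
        (W k).1.2.2.2.1, (W k).1.2.2.2.2].getD x e1)
      (by
        intro a ha
        rw [List.mem_singleton] at ha
        subst ha
        exact (W k).2)
    have e0 : h3 0 = (W k).1.1 := hf3 0 (by simp)
    have e1' : h3 1 = (W k).1.2.1 := hf3 1 (by simp)
    have e2' : h3 2 = (W k).1.2.2.1 := hf3 2 (by simp)
    have e3 : h3 3 = (W k).1.2.2.2.1 := hf3 3 (by simp)
    have e4 : h3 4 = (W k).1.2.2.2.2 := hf3 4 (by simp)
    have hPf : f2 PyrR (h3 0) (h3 1) ∈ J := hh3 ⟨PyrR, [0, 1]⟩ (by simp)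
    have hTf : f2 ThiR (h3 4) (h3 3) ∈ J := hh3 ⟨ThiR, [4, 3]⟩ (by simp)
    have hC1f : f2 ChnR (h3 2) (h3 1) ∈ J := hh3 ⟨ChnR, [2, 1]⟩ (by simp)
    have hC2f : f2 ChnR (h3 2) (h3 3) ∈ J := hh3 ⟨ChnR, [2, 3]⟩ (by simp)
    rw [e0, e1', ← hlinkU k] at hPf
    rw [e4, e3, ← hlinkV k] at hTf
    rw [e2', e1', ← hlinkU k] at hC1f
    rw [e2', e3, ← hlinkV k] at hC2f
    exact ⟨hPf, hTf, hC1f, hC2f⟩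
  -- map everything into the river
  have hPin : PyrR ∈ SQmyth := by simp [SQmyth]
  have hTin : ThiR ∈ SQmyth := by simp [SQmyth]
  have hCin : ChnR ∈ SQmyth := by simp [SQmyth]
  refine no_walks hlen hn hp ht hsync (fun k => h ((W k).1.1)) (fun k => h ((W k).1.2.2.2.2))
    ?_ ?_ ?_ ?_ ?_
  · exact dbp_br hdb _
  · exact dbp_br hdb _
  · intro k
    have := hhom _ (hfacts k).1 hPin
    rwa [f2_map] at this
  · intro k
    have := hhom _ (hfacts k).2.1 hTin
    rwa [f2_map] at this
  · intro k
    refine ⟨h ((W k).1.2.2.1), ?_, ?_⟩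
    · have := hhom _ (hfacts k).2.2.1 hCin
      rwa [f2_map] at this
    · have := hhom _ (hfacts k).2.2.2 hCin
      rwa [f2_map] at this

/-! ### Universality of the chase -/

lemma chase_universal {T : List TGD} (hfr : ∀ tg ∈ T, ∀ x ∈ tg.frontier, x ∈ tg.bodyVars)
    {I K J : Inst} (hIK : I ⊆ K) (hmod : IsModel K T) (hJ : IsChaseResult T I J) :
    ∃ H : Term → Term, DBPres H ∧ IsFullHom H J K := by
  classical
  obtain ⟨f, hseq, hfair, rfl⟩ := hJ
  have mono := chaseSeq_mono hseq
  have key : ∀ i (h : Term → Term), (DBPres h ∧ IsFullHom h (f i) K) →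
      ∃ h', (DBPres h' ∧ IsFullHom h' (f (i+1)) K) ∧ ∀ x ∈ adom (f i), h' x = h x := by
    rintro i h ⟨hdb, hhom⟩
    rcases hseq.2 i with ⟨tg, htg, c, ⟨⟨g, hgbody, hgc⟩, -⟩, s, hsc, hfresh, hinj, hres⟩|⟨-, heq⟩
    swap
    · exact ⟨h, ⟨hdb, by rw [heq]; exact hhom⟩, fun x _ => rfl⟩
    obtain ⟨w, hwhead, hwfr⟩ := hmod tg htg (h ∘ g) (by
      intro a ha
      have heqa : Atom.inst (h ∘ g) a = (Atom.inst g a).map h := by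
        simp [Atom.inst, Fct.map, List.map_map]
      rw [heqa]
      exact hhom _ (hgbody a ha))
    have hsg : ∀ x ∈ tg.frontier, s x = g x := mapEqOn (hsc.trans hgc.symm)
    have hgadom : ∀ x ∈ tg.frontier, g x ∈ adom (f i) := by
      intro x hx
      obtain ⟨a, ha, hxa⟩ := hfr tg htg x hx
      exact ⟨Atom.inst g a, hgbody a ha, List.mem_map_of_mem (f := g) hxa⟩
    refine ⟨fun u => if hu : ∃ y, y ∈ tg.headVars ∧ y ∉ tg.frontier ∧ s y = u
      then w hu.choose else h u, ⟨?_, ?_⟩, ?_⟩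
    · -- DBPres
      intro m
      beta_reduce
      rw [dif_neg (by
        rintro ⟨y, hy1, hy2, hy3⟩
        exact (hfresh y hy1 hy2).1 (by rw [hy3]; trivial))]
      exact hdb m
    · -- hom on f (i+1)
      rw [hres]
      rintro F (hF|⟨a, ha, rfl⟩)
      · have heqF : F.args.map (fun u => if hu : ∃ y, y ∈ tg.headVars ∧ y ∉ tg.frontier ∧ s y = u
            then w hu.choose else h u) = F.args.map h := by
          apply List.map_congr_left
          intro x hxF
          beta_reduce
          rw [dif_neg (by
            rintro ⟨y, hy1, hy2, hy3⟩
            exact (hfresh y hy1 hy2).2 (hy3 ▸ ⟨F, hF, hxF⟩))]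
        show (⟨F.rel, _⟩ : Fct) ∈ K
        rw [heqF]
        exact hhom F hF
      · have heqA : (Atom.inst s a).map (fun u =>
            if hu : ∃ y, y ∈ tg.headVars ∧ y ∉ tg.frontier ∧ s y = u
            then w hu.choose else h u) = Atom.inst w a := by
          simp only [Atom.inst, Fct.map, List.map_map]
          congr 1
          apply List.map_congr_left
          intro y hy
          have hyhead : y ∈ tg.headVars := ⟨a, ha, hy⟩
          show (if hu : ∃ y', y' ∈ tg.headVars ∧ y' ∉ tg.frontier ∧ s y' = s y
            then w hu.choose else h (s y)) = w y
          by_cases hyf : y ∈ tg.frontier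
          · rw [dif_neg (by
              rintro ⟨y', a1, a2, a3⟩
              refine (hfresh y' a1 a2).2 ?_
              rw [a3, hsg y hyf]
              exact hgadom y hyf)]
            rw [hsg y hyf]
            exact (hwfr y hyf).symm
          · have hex : ∃ y', y' ∈ tg.headVars ∧ y' ∉ tg.frontier ∧ s y' = s y :=
              ⟨y, hyhead, hyf, rfl⟩
            rw [dif_pos hex]
            obtain ⟨c1, c2, c3⟩ := hex.choose_spec
            rw [hinj _ _ c1 hyhead c2 hyf c3]
        rw [heqA]
        exact hwhead a ha
    · -- agreement on old active domain
      intro x hx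
      beta_reduce
      rw [dif_neg (by
        rintro ⟨y, hy1, hy2, hy3⟩
        exact (hfresh y hy1 hy2).2 (hy3 ▸ hx))]
  have base : DBPres (id : Term → Term) ∧ IsFullHom id (f 0) K := by
    refine ⟨fun n => rfl, ?_⟩
    rw [hseq.1]
    intro F hF
    have : F.map id = F := by simp [Fct.map]
    rw [this]
    exact hIK hF
  let G : ∀ _ : ℕ, {h : Term → Term // DBPres h ∧ IsFullHom h (f _) K} := fun i =>
    Nat.rec (motive := fun i => {h : Term → Term // DBPres h ∧ IsFullHom h (f i) K})
      ⟨id, base⟩ (fun i p => ⟨(key i p.1 p.2).choose, ((key i p.1 p.2).choose_spec).1⟩) i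
  have hGsucc : ∀ i, ∀ x ∈ adom (f i), (G (i+1)).1 x = (G i).1 x :=
    fun i => ((key i (G i).1 (G i).2).choose_spec).2
  have hstable : ∀ i j, i ≤ j → ∀ x ∈ adom (f i), (G j).1 x = (G i).1 x := by
    intro i j hij
    induction j with
    | zero => obtain rfl : i = 0 := by omega
              exact fun x _ => rfl
    | succ j ih =>
      rcases Nat.eq_or_lt_of_le hij with rfl|hlt
      · exact fun x _ => rfl
      · intro x hx
        have hxj : x ∈ adom (f j) := by
          obtain ⟨F, hF, hxF⟩ := hx
          exact ⟨F, mono i j (by omega) hF, hxF⟩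
        rw [hGsucc j x hxj, ih (by omega) x hx]
  refine ⟨fun u => if hu : ∃ i, u ∈ adom (f i) then (G (Nat.find hu)).1 u else u, ?_, ?_⟩
  · intro m
    beta_reduce
    by_cases hu : ∃ i, (Term.const m) ∈ adom (f i)
    · rw [dif_pos hu]
      exact (G _).2.1 m
    · rw [dif_neg hu]
  · intro F hF
    obtain ⟨i, hFi⟩ := Set.mem_iUnion.1 hF
    have heqF : F.map (fun u => if hu : ∃ i, u ∈ adom (f i) then (G (Nat.find hu)).1 u else u) =
        F.map ((G i).1) := by
      simp only [Fct.map]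
      congr 1
      apply List.map_congr_left
      intro x hxF
      beta_reduce
      have hx : x ∈ adom (f i) := ⟨F, hFi, hxF⟩
      have hu : ∃ j, x ∈ adom (f j) := ⟨i, hx⟩
      rw [dif_pos hu]
      exact (hstable _ i (Nat.find_min' hu hx) x (Nat.find_spec hu)).symm
    rw [heqF]
    exact (G i).2.2 F hFi

/-! ### The backward walk: definitions and helper lemmas -/

lemma worldly_pW {p t : List ℕ} (hp : ∀ x ∈ p, 1 ≤ x) {k : ℕ} (hk : k ≤ sS p 0 p.length) :
    Worldly p t (gwalk (pnode p) p p.length k) := by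
  rcases gwalk_range (listpos hp) (pnode_full hp) (le_refl _) hk with
    ⟨a,b,b1,b2,b3,b4,heq⟩|heq <;> rw [heq]
  · exact worldly_pnode b1 b2 b3 b4
  · exact worldly_br (Nat.zero_le _)

lemma worldly_tW {p t : List ℕ} (hlen : p.length = t.length) (ht : ∀ x ∈ t, 1 ≤ x) {lev : ℕ}
    (hlev : lev ≤ t.length) {k : ℕ} (hk : k ≤ sS t 0 lev) :
    Worldly p t (gwalk (tnode t) t lev k) := by
  rcases gwalk_range (listpos ht) (tnode_full ht) hlev hk with
    ⟨a,b,b1,b2,b3,b4,heq⟩|heq <;> rw [heq]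
  · exact worldly_tnode hlen b1 b2 b3 b4
  · exact worldly_br (Nat.zero_le _)

lemma pW_edge {p t : List ℕ} (hp : ∀ x ∈ p, 1 ≤ x) {k : ℕ} (hk : k + 1 ≤ sS p 0 p.length) :
    f2 PyrR (gwalk (pnode p) p p.length k) (gwalk (pnode p) p p.length (k+1)) ∈ River p t :=
  gwalk_edge (P := fun x y => f2 PyrR x y ∈ River p t) (listpos hp) (pnode_zero p)
    (pnode_full hp) (fun _ _ c1 c2 c3 c4 => riv_pyrEdge c1 c2 c3 c4) (le_refl _) hk

lemma tW_edge {p t : List ℕ} (ht : ∀ x ∈ t, 1 ≤ x) {lev : ℕ} (hlev : lev ≤ t.length) {k : ℕ}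
    (hk : k + 1 ≤ sS t 0 lev) :
    f2 ThiR (gwalk (tnode t) t lev k) (gwalk (tnode t) t lev (k+1)) ∈ River p t :=
  gwalk_edge (P := fun x y => f2 ThiR x y ∈ River p t) (listpos ht) (tnode_zero t)
    (tnode_full ht) (fun _ _ c1 c2 c3 c4 => riv_thiEdge c1 c2 c3 c4) hlev hk

lemma exists_walk {p t : List ℕ} (hlen : p.length = t.length) (hn : 1 ≤ p.length)
    (hp : ∀ x ∈ p, 1 ≤ x) (ht : ∀ x ∈ t, 1 ≤ x) {m : ℕ}
    (h1 : 1 ≤ m) (h2 : m < p.length) (h3 : t.getD (m-1) 0 ≠ p.getD m 0)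
    (hsync : ∀ idx, m ≤ idx → idx + 1 < p.length → t.getD idx 0 = p.getD (idx+1) 0) :
    ∃ A B G : ℕ → Term, A 0 = br p.length ∧ B 0 = br (p.length - 1) ∧ ∀ k,
      f2 PyrR (A k) (A (k+1)) ∈ River p t ∧ f2 ThiR (B k) (B (k+1)) ∈ River p t ∧
      f2 ChnR (G (k+1)) (A (k+1)) ∈ River p t ∧ f2 ChnR (G (k+1)) (B (k+1)) ∈ River p t := by
  obtain ⟨m', rfl⟩ : ∃ m', m = m' + 1 := ⟨m-1, by omega⟩
  obtain ⟨n', hnn⟩ : ∃ n', p.length = n' + 1 := ⟨p.length-1, by omega⟩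
  have hts : t.length = n' + 1 := by omega
  simp only [Nat.add_sub_cancel] at h3
  have htm : 1 ≤ t.getD m' 0 := listpos ht m' (by omega)
  have hpm : 1 ≤ p.getD (m'+1) 0 := listpos hp (m'+1) (by omega)
  have hsum1 : sS t (m'+1) n' = sS p (m'+2) (n'+1) :=
    sync_sum (m := m'+1) (n := p.length) hsync hn (le_refl _) n' (by omega) (by omega)
  have hsplit_t : sS t m' n' = t.getD m' 0 + sS t (m'+1) n' := by
    rw [← sS_consec (l := t) (show m' ≤ m'+1 by omega) (show m'+1 ≤ n' by omega),
      sS_succ_top (le_refl m'), sS_self]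
    omega
  have hsplit_p : sS p (m'+1) (n'+1) = p.getD (m'+1) 0 + sS p (m'+2) (n'+1) := by
    rw [← sS_consec (l := p) (show m'+1 ≤ m'+2 by omega) (show m'+2 ≤ n'+1 by omega),
      sS_succ_top (le_refl (m'+1)), sS_self]
    omega
  have hfullP : sS p 0 (m'+2) + sS p (m'+2) (n'+1) = sS p 0 (n'+1) :=
    sS_consec (by omega) (by omega)
  have hsingleP : p.getD (m'+1) 0 ≤ sS p 0 (m'+2) := sS_single_le (by omega) (by omega)
  have hfullT : sS t 0 (m'+1) + sS t (m'+1) n' = sS t 0 n' := sS_consec (by omega) (by omega)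
  have hsingleT : t.getD m' 0 ≤ sS t 0 (m'+1) := sS_single_le (by omega) (by omega)
  rcases Nat.lt_or_ge (t.getD m' 0) (p.getD (m'+1) 0) with hlt|hge
  · -- t_m < p_{m+1} : escape to e₂
    obtain ⟨E, hEdef⟩ : ∃ E, E = sS t m' n' := ⟨_, rfl⟩
    have hE : E = sS p (m'+2) (n'+1) + t.getD m' 0 := by omega
    have hEp : E ≤ sS p 0 p.length := by rw [hnn]; omega
    have hEt : E ≤ sS t 0 n' := by
      have := sS_mono (l := t) (a := m') (a' := 0) (b := n') (b' := n') (by omega) (le_refl _)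
      omega
    have hAE : gwalk (pnode p) p p.length E =
        pyrC (m'+2) (p.getD (m'+1) 0 - t.getD m' 0) := by
      rw [hnn, hE, gwalk_add (show m'+2 ≤ n'+1 by omega)]
      show gwalk (pnode p) p ((m'+1)+1) (t.getD m' 0) = _
      rw [gwalk_succ, if_pos hlt, pnode_eval (show 1 ≤ p.getD (m'+1) 0 - t.getD m' 0 by omega),
        if_neg (show ¬ (p.getD (m'+1) 0 - t.getD m' 0 = p.getD ((m'+1)+1-1) 0) from by
          simp only [Nat.add_sub_cancel]; omega)]
    have hBE : gwalk (tnode t) t n' E = br m' := by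
      rw [hEdef, show sS t m' n' = sS t m' n' + 0 by omega,
        gwalk_add (show m' ≤ n' by omega), gwalk_zero (listpos ht) (tnode_full ht) (by omega)]
    refine ⟨fun k => if k ≤ E then gwalk (pnode p) p p.length k else e2,
      fun k => if k ≤ E then gwalk (tnode t) t n' k else e2,
      fun k => if k ≤ E then chanC else e2, ?_, ?_, ?_⟩
    · beta_reduce
      rw [if_pos (Nat.zero_le E), gwalk_zero (listpos hp) (pnode_full hp) (le_refl _)]
    · beta_reduce
      rw [if_pos (Nat.zero_le E), gwalk_zero (listpos ht) (tnode_full ht) (by omega)]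
      congr 1
      omega
    · intro k
      beta_reduce
      rcases Nat.lt_trichotomy k E with hk|hk|hk
      · simp only [if_pos (show k ≤ E by omega), if_pos (show k+1 ≤ E by omega)]
        refine ⟨pW_edge hp (by omega), tW_edge ht (show n' ≤ t.length by omega) (by omega),
          ?_, ?_⟩
        · exact riv_chan (worldly_pW hp (by omega))
        · exact riv_chan (worldly_tW hlen ht (by omega) (by omega))
      · rw [hk]
        simp only [if_pos (le_refl E), if_neg (show ¬ (E+1 ≤ E) by omega), hAE, hBE]
        refine ⟨riv_pyrC_e2 (by omega) (by omega) (by omega) (by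
            simp only [show (m':ℕ)+2-1 = m'+1 from rfl]; omega),
          riv_br_thi_e2 (by omega), ?_, ?_⟩
        · exact riv_et (Or.inr rfl) (Or.inr (Or.inr rfl))
        · exact riv_et (Or.inr rfl) (Or.inr (Or.inr rfl))
      · simp only [if_neg (show ¬ (k ≤ E) by omega), if_neg (show ¬ (k+1 ≤ E) by omega)]
        exact ⟨riv_et (Or.inr rfl) (Or.inl rfl), riv_et (Or.inr rfl) (Or.inr (Or.inl rfl)),
          riv_et (Or.inr rfl) (Or.inr (Or.inr rfl)), riv_et (Or.inr rfl) (Or.inr (Or.inr rfl))⟩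
  · -- t_m > p_{m+1} : escape to e₁
    have hgt : p.getD (m'+1) 0 < t.getD m' 0 := by omega
    obtain ⟨E, hEdef⟩ : ∃ E, E = sS p (m'+1) (n'+1) := ⟨_, rfl⟩
    have hE : E = sS t (m'+1) n' + p.getD (m'+1) 0 := by omega
    have hEp : E ≤ sS p 0 p.length := by
      rw [hnn]
      have := sS_mono (l := p) (a := m'+1) (a' := 0) (b := n'+1) (b' := n'+1)
        (by omega) (le_refl _)
      omega
    have hEt : E ≤ sS t 0 n' := by omega
    have hAE : gwalk (pnode p) p p.length E = br (m'+1) := by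
      rw [hnn, hEdef, show sS p (m'+1) (n'+1) = sS p (m'+1) (n'+1) + 0 by omega,
        gwalk_add (show m'+1 ≤ n'+1 by omega),
        gwalk_zero (listpos hp) (pnode_full hp) (by omega)]
    have hBE : gwalk (tnode t) t n' E =
        thiC (m'+1) (t.getD m' 0 - p.getD (m'+1) 0) := by
      rw [hE, gwalk_add (show m'+1 ≤ n' by omega)]
      show gwalk (tnode t) t (m'+1) (p.getD (m'+1) 0) = _
      rw [gwalk_succ, if_pos hgt, tnode_eval (show 1 ≤ t.getD m' 0 - p.getD (m'+1) 0 by omega),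
        if_neg (show ¬ (t.getD m' 0 - p.getD (m'+1) 0 = t.getD (m'+1-1) 0) from by
          simp only [Nat.add_sub_cancel]; omega)]
    refine ⟨fun k => if k ≤ E then gwalk (pnode p) p p.length k else e1,
      fun k => if k ≤ E then gwalk (tnode t) t n' k else e1,
      fun k => if k ≤ E then chanC else e1, ?_, ?_, ?_⟩
    · beta_reduce
      rw [if_pos (Nat.zero_le E), gwalk_zero (listpos hp) (pnode_full hp) (le_refl _)]
    · beta_reduce
      rw [if_pos (Nat.zero_le E), gwalk_zero (listpos ht) (tnode_full ht) (by omega)]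
      congr 1
      omega
    · intro k
      beta_reduce
      rcases Nat.lt_trichotomy k E with hk|hk|hk
      · simp only [if_pos (show k ≤ E by omega), if_pos (show k+1 ≤ E by omega)]
        refine ⟨pW_edge hp (by omega), tW_edge ht (show n' ≤ t.length by omega) (by omega),
          ?_, ?_⟩
        · exact riv_chan (worldly_pW hp (by omega))
        · exact riv_chan (worldly_tW hlen ht (by omega) (by omega))
      · rw [hk]
        simp only [if_pos (le_refl E), if_neg (show ¬ (E+1 ≤ E) by omega), hAE, hBE]
        refine ⟨riv_br_pyr_e1 (by omega),
          riv_thiC_e1 (by omega) (by omega) (by omega) (by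
            simp only [Nat.add_sub_cancel]; omega), ?_, ?_⟩
        · exact riv_et (Or.inl rfl) (Or.inr (Or.inr rfl))
        · exact riv_et (Or.inl rfl) (Or.inr (Or.inr rfl))
      · simp only [if_neg (show ¬ (k ≤ E) by omega), if_neg (show ¬ (k+1 ≤ E) by omega)]
        exact ⟨riv_et (Or.inl rfl) (Or.inl rfl), riv_et (Or.inl rfl) (Or.inr (Or.inl rfl)),
          riv_et (Or.inl rfl) (Or.inr (Or.inr rfl)), riv_et (Or.inl rfl) (Or.inr (Or.inr rfl))⟩

/-! ### The model K and the backward direction -/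

lemma tmyth_frontier : ∀ tg ∈ Tmyth, ∀ x ∈ tg.frontier, x ∈ tg.bodyVars := by
  intro tg htg
  simp only [Tmyth, List.mem_cons, List.not_mem_nil, or_false] at htg
  rcases htg with rfl|rfl|rfl <;> intro x hx <;>
    simp only [TGD.bodyVars, Set.mem_setOf_eq]
  · exact ⟨⟨EncR, [0,1]⟩, by simp, by simpa using hx⟩
  · exact ⟨⟨MR, [0,1,2,3,4]⟩, by simp, by simp at hx ⊢; omega⟩
  · exact ⟨⟨MR, [0,1,2,3,4]⟩, by simp, by simp at hx ⊢; omega⟩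

lemma model_K {p t : List ℕ} (A B G : ℕ → Term) (hA0 : A 0 = br p.length)
    (hB0 : B 0 = br (p.length - 1))
    (hstep : ∀ k, f2 PyrR (A k) (A (k+1)) ∈ River p t ∧ f2 ThiR (B k) (B (k+1)) ∈ River p t ∧
      f2 ChnR (G (k+1)) (A (k+1)) ∈ River p t ∧ f2 ChnR (G (k+1)) (B (k+1)) ∈ River p t) :
    IsModel (River p t ∪ {f | ∃ k, f = ⟨MR, [A k, A (k+1), G (k+1), B (k+1), B k]⟩}) Tmyth := by
  intro tg htg
  simp only [Tmyth, List.mem_cons, List.not_mem_nil, or_false] at htg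
  rcases htg with rfl|rfl|rfl
  · intro g hg
    have hb : (⟨EncR, [g 0, g 1]⟩ : Fct) ∈ River p t ∪
        {f | ∃ k, f = ⟨MR, [A k, A (k+1), G (k+1), B (k+1), B k]⟩} := hg ⟨EncR, [0,1]⟩ (by simp)
    rcases hb with hR|⟨k, hk⟩
    · obtain ⟨hg0, hg1⟩ := riv_enc (show f2 EncR (g 0) (g 1) ∈ River p t from hR)
      refine ⟨fun x => [g 0, g 1, A 1, G 1, B 1].getD x e1, ?_, ?_⟩
      · intro a ha
        simp only [List.mem_singleton] at ha
        subst ha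
        refine Or.inr ⟨0, ?_⟩
        show (⟨MR, [g 0, A 1, G 1, B 1, g 1]⟩ : Fct) = _
        rw [hg0, hg1, ← hA0, ← hB0]
      · intro x hx
        simp only [List.mem_cons, List.not_mem_nil, or_false] at hx
        rcases hx with rfl|rfl <;> rfl
    · exact absurd (congrArg Fct.rel hk) (by simp [EncR, MR])
  · intro g hg
    have hb : (⟨MR, [g 0, g 1, g 2, g 3, g 4]⟩ : Fct) ∈ River p t ∪
        {f | ∃ k, f = ⟨MR, [A k, A (k+1), G (k+1), B (k+1), B k]⟩} :=
      hg ⟨MR, [0,1,2,3,4]⟩ (by simp)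
    rcases hb with hR|⟨k, hk⟩
    · exact absurd rfl (riv_no_MR hR)
    · simp only [Fct.mk.injEq, List.cons.injEq, and_true, true_and] at hk
      obtain ⟨e0, e1', e2', e3, e4⟩ := hk
      refine ⟨fun x => [g 0, g 1, g 2, g 3, g 4, A (k+2), G (k+2), B (k+2)].getD x e1, ?_, ?_⟩
      · intro a ha
        simp only [List.mem_singleton] at ha
        subst ha
        refine Or.inr ⟨k+1, ?_⟩
        show (⟨MR, [g 1, A (k+2), G (k+2), B (k+2), g 3]⟩ : Fct) = _
        rw [e1', e3]
      · intro x hx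
        simp only [List.mem_cons, List.not_mem_nil, or_false] at hx
        rcases hx with rfl|rfl <;> rfl
  · intro g hg
    have hb : (⟨MR, [g 0, g 1, g 2, g 3, g 4]⟩ : Fct) ∈ River p t ∪
        {f | ∃ k, f = ⟨MR, [A k, A (k+1), G (k+1), B (k+1), B k]⟩} :=
      hg ⟨MR, [0,1,2,3,4]⟩ (by simp)
    rcases hb with hR|⟨k, hk⟩
    · exact absurd rfl (riv_no_MR hR)
    · simp only [Fct.mk.injEq, List.cons.injEq, and_true, true_and] at hk
      obtain ⟨e0, e1', e2', e3, e4⟩ := hk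
      refine ⟨g, ?_, fun x _ => rfl⟩
      intro a ha
      simp only [List.mem_cons, List.not_mem_nil, or_false] at ha
      rcases ha with rfl|rfl|rfl|rfl
      · show f2 PyrR (g 0) (g 1) ∈ _
        rw [e0, e1']
        exact Or.inl (hstep k).1
      · show f2 ThiR (g 4) (g 3) ∈ _
        rw [e4, e3]
        exact Or.inl (hstep k).2.1
      · show f2 ChnR (g 2) (g 1) ∈ _
        rw [e2', e1']
        exact Or.inl (hstep k).2.2.1
      · show f2 ChnR (g 2) (g 3) ∈ _
        rw [e2', e3]
        exact Or.inl (hstep k).2.2.2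

lemma backward_hom {p t : List ℕ} (hlen : p.length = t.length) (hn : 1 ≤ p.length)
    (hp : ∀ x ∈ p, 1 ≤ x) (ht : ∀ x ∈ t, 1 ≤ x) {m : ℕ}
    (h1 : 1 ≤ m) (h2 : m < p.length) (h3 : t.getD (m-1) 0 ≠ p.getD m 0)
    (hsync : ∀ idx, m ≤ idx → idx + 1 < p.length → t.getD idx 0 = p.getD (idx+1) 0)
    {J : Inst} (hJ : IsChaseResult Tmyth (River p t) J) : HomTo SQmyth J (River p t) := by
  obtain ⟨A, B, G, hA0, hB0, hstep⟩ := exists_walk hlen hn hp ht h1 h2 h3 hsync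
  obtain ⟨H, hdb, hfull⟩ := chase_universal tmyth_frontier Set.subset_union_left
    (model_K A B G hA0 hB0 hstep) hJ
  refine ⟨H, hdb, ?_⟩
  intro F hF hrel
  rcases hfull F hF with hR|⟨k, hk⟩
  · exact hR
  · exfalso
    have hFr : F.rel = MR := by
      have := congrArg Fct.rel hk
      simpa [Fct.map] using this
    rw [hFr] at hrel
    simpa [SQmyth, MR, PyrR, ThiR, ChnR, EncR, MouthR] using hrel

/-! ### An explicit fair chase sequence for the river -/

def uu (n : ℕ) : ℕ → Term
  | 0 => br n
  | k+1 => .null (3*k)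

def vv (n : ℕ) : ℕ → Term
  | 0 => br (n-1)
  | k+1 => .null (3*k+2)

def gg : ℕ → Term
  | 0 => e1
  | k+1 => .null (3*k+1)

def Ms (n k : ℕ) : Fct := ⟨MR, [uu n k, uu n (k+1), gg (k+1), vv n (k+1), vv n k]⟩

def T3f (n k : ℕ) : Set Fct :=
  {f2 PyrR (uu n k) (uu n (k+1)), f2 ThiR (vv n k) (vv n (k+1)),
   f2 ChnR (gg (k+1)) (uu n (k+1)), f2 ChnR (gg (k+1)) (vv n (k+1))}

def gSeq (p t : List ℕ) (i : ℕ) : Inst :=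
  River p t ∪ {f | ∃ k, 2*k < i ∧ f = Ms p.length k} ∪
    {f | ∃ k, 2*k+1 < i ∧ f ∈ T3f p.length k}

lemma uu_null {n k j : ℕ} (h : Term.null j = uu n k) : j = 3*(k-1) ∧ 1 ≤ k := by
  cases k with
  | zero => exact absurd h (by simp [uu, br])
  | succ k => simp [uu] at h
              omega

lemma vv_null {n k j : ℕ} (h : Term.null j = vv n k) : j = 3*(k-1)+2 ∧ 1 ≤ k := by
  cases k with
  | zero => exact absurd h (by simp [vv, br])
  | succ k => simp [vv] at h
              omega

lemma gg_null {k j : ℕ} (h : Term.null j = gg k) : j = 3*(k-1)+1 ∧ 1 ≤ k := by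
  cases k with
  | zero => exact absurd h (by simp [gg, e1])
  | succ k => simp [gg] at h
              omega

lemma Ms_null {n k j : ℕ} (h : Term.null j ∈ (Ms n k).args) : j < 3*k+3 := by
  simp only [Ms, List.mem_cons, List.not_mem_nil, or_false] at h
  rcases h with h|h|h|h|h
  · obtain ⟨h1, h2⟩ := uu_null h
    omega
  · obtain ⟨h1, h2⟩ := uu_null h
    omega
  · obtain ⟨h1, h2⟩ := gg_null h
    omega
  · obtain ⟨h1, h2⟩ := vv_null h
    omega
  · obtain ⟨h1, h2⟩ := vv_null h
    omega

lemma T3f_null {n k j : ℕ} {F : Fct} (hF : F ∈ T3f n k) (h : Term.null j ∈ F.args) :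
    j < 3*k+3 := by
  rcases hF with rfl|rfl|rfl|rfl <;>
    simp only [f2, List.mem_cons, List.not_mem_nil, or_false] at h <;>
    rcases h with h|h
  · obtain ⟨h1, h2⟩ := uu_null h; omega
  · obtain ⟨h1, h2⟩ := uu_null h; omega
  · obtain ⟨h1, h2⟩ := vv_null h; omega
  · obtain ⟨h1, h2⟩ := vv_null h; omega
  · obtain ⟨h1, h2⟩ := gg_null h; omega
  · obtain ⟨h1, h2⟩ := uu_null h; omega
  · obtain ⟨h1, h2⟩ := gg_null h; omega
  · obtain ⟨h1, h2⟩ := vv_null h; omega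

lemma gSeq_null {p t : List ℕ} {i j : ℕ} (h : Term.null j ∈ adom (gSeq p t i)) :
    ∃ k, 2*k < i ∧ j < 3*k+3 := by
  obtain ⟨F, hF, hjF⟩ := h
  rcases hF with (hR|⟨k, hki, rfl⟩)|⟨k, hki, hT⟩
  · have := riv_const hR _ hjF
    simp [Term.isConst] at this
  · exact ⟨k, hki, Ms_null hjF⟩
  · exact ⟨k, by omega, T3f_null hT hjF⟩

lemma gSeq_MR {p t : List ℕ} {i : ℕ} {args : List Term}
    (h : (⟨MR, args⟩ : Fct) ∈ gSeq p t i) :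
    ∃ k, 2*k < i ∧ (⟨MR, args⟩ : Fct) = Ms p.length k := by
  rcases h with (hR|⟨k, hki, he⟩)|⟨k, hki, hT⟩
  · exact absurd rfl (riv_no_MR hR)
  · exact ⟨k, hki, he⟩
  · rcases hT with he|he|he|he <;>
      exact absurd (congrArg Fct.rel he) (by simp [f2, MR, PyrR, ThiR, ChnR])

lemma gSeq_Enc {p t : List ℕ} {i : ℕ} {x y : Term} (h : f2 EncR x y ∈ gSeq p t i) :
    x = br p.length ∧ y = br (p.length - 1) := by
  rcases h with (hR|⟨k, hki, he⟩)|⟨k, hki, hT⟩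
  · exact riv_enc hR
  · exact absurd (congrArg Fct.rel he) (by simp [f2, Ms, MR, EncR])
  · rcases hT with he|he|he|he <;>
      exact absurd (congrArg Fct.rel he) (by simp [f2, EncR, PyrR, ThiR, ChnR])

lemma pyr_not_in {p t : List ℕ} {k i : ℕ} (hi : i ≤ 2*k+1) :
    f2 PyrR (uu p.length k) (uu p.length (k+1)) ∉ gSeq p t i := by
  intro h
  rcases h with (hR|⟨k', hki, he⟩)|⟨k', hki, hT⟩
  · have := riv_const hR (uu p.length (k+1)) (by simp [f2])
    simp [uu, Term.isConst] at this
  · exact absurd (congrArg Fct.rel he) (by simp [f2, Ms, MR, PyrR])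
  · rcases hT with he|he|he|he
    · have h2 := (f2_eq.1 he).2.2
      simp only [uu] at h2
      have : k = k' := by simpa using h2
      omega
    · exact absurd (congrArg Fct.rel he) (by simp [f2, PyrR, ThiR])
    · exact absurd (congrArg Fct.rel he) (by simp [f2, PyrR, ChnR])
    · exact absurd (congrArg Fct.rel he) (by simp [f2, PyrR, ChnR])

lemma gSeq_zero (p t : List ℕ) : gSeq p t 0 = River p t := by
  ext F
  simp [gSeq]

lemma gSeq_one (p t : List ℕ) : gSeq p t 1 = gSeq p t 0 ∪ {Ms p.length 0} := by
  ext F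
  simp only [gSeq, Set.mem_union, Set.mem_setOf_eq, Set.mem_singleton_iff]
  constructor
  · rintro ((hR|⟨k, h1, h2⟩)|⟨k, h1, h2⟩)
    · exact Or.inl (Or.inl (Or.inl hR))
    · obtain rfl : k = 0 := by omega
      exact Or.inr h2
    · omega
  · rintro (((hR|⟨k, h1, h2⟩)|⟨k, h1, h2⟩)|h)
    · exact Or.inl (Or.inl hR)
    · omega
    · omega
    · exact Or.inl (Or.inr ⟨0, by omega, h⟩)

lemma gSeq_stepT3 (p t : List ℕ) (k : ℕ) :
    gSeq p t (2*k+2) = gSeq p t (2*k+1) ∪ T3f p.length k := by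
  ext F
  simp only [gSeq, Set.mem_union, Set.mem_setOf_eq]
  constructor
  · rintro ((hR|⟨k', h1, h2⟩)|⟨k', h1, h2⟩)
    · exact Or.inl (Or.inl (Or.inl hR))
    · exact Or.inl (Or.inl (Or.inr ⟨k', by omega, h2⟩))
    · rcases Nat.lt_or_ge (2*k'+1) (2*k+1) with h|h
      · exact Or.inl (Or.inr ⟨k', h, h2⟩)
      · obtain rfl : k' = k := by omega
        exact Or.inr h2
  · rintro (((hR|⟨k', h1, h2⟩)|⟨k', h1, h2⟩)|h)
    · exact Or.inl (Or.inl hR)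
    · exact Or.inl (Or.inr ⟨k', by omega, h2⟩)
    · exact Or.inr ⟨k', by omega, h2⟩
    · exact Or.inr ⟨k, by omega, h⟩

lemma gSeq_stepMs (p t : List ℕ) (k : ℕ) :
    gSeq p t (2*k+3) = gSeq p t (2*k+2) ∪ {Ms p.length (k+1)} := by
  ext F
  simp only [gSeq, Set.mem_union, Set.mem_setOf_eq, Set.mem_singleton_iff]
  constructor
  · rintro ((hR|⟨k', h1, h2⟩)|⟨k', h1, h2⟩)
    · exact Or.inl (Or.inl (Or.inl hR))
    · rcases Nat.lt_or_ge (2*k') (2*k+2) with h|h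
      · exact Or.inl (Or.inl (Or.inr ⟨k', h, h2⟩))
      · obtain rfl : k' = k+1 := by omega
        exact Or.inr h2
    · exact Or.inl (Or.inr ⟨k', by omega, h2⟩)
  · rintro (((hR|⟨k', h1, h2⟩)|⟨k', h1, h2⟩)|h)
    · exact Or.inl (Or.inl hR)
    · exact Or.inl (Or.inr ⟨k', by omega, h2⟩)
    · exact Or.inr ⟨k', by omega, h2⟩
    · exact Or.inl (Or.inr ⟨k+1, by omega, h⟩)

lemma chase_exists (p t : List ℕ) : ∃ J, IsChaseResult Tmyth (River p t) J := by
  classical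
  refine ⟨⋃ i, gSeq p t i, gSeq p t, ⟨gSeq_zero p t, ?_⟩, ?_, rfl⟩
  · -- chase steps
    intro i
    left
    obtain ⟨k, hk⟩ : ∃ k, i = 0 ∨ i = 2*k+1 ∨ i = 2*k+2 := ⟨(i-1)/2, by omega⟩
    rcases hk with rfl|rfl|rfl
    · -- TGD1 at the encounter
      refine ⟨⟨[⟨EncR, [0, 1]⟩], [⟨MR, [0, 2, 3, 4, 1]⟩], [0, 1]⟩, by simp [Tmyth],
        [br p.length, br (p.length-1)],
        ⟨⟨fun x => [br p.length, br (p.length-1)].getD x e1, ?_, rfl⟩, ?_⟩, ?_⟩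
      · intro a ha
        rw [List.mem_singleton] at ha
        subst ha
        rw [gSeq_zero]
        exact riv_enc_mem
      · rintro ⟨h, hh, -⟩
        obtain ⟨k, hk0, -⟩ := gSeq_MR
          (show (⟨MR, [h 0, h 2, h 3, h 4, h 1]⟩ : Fct) ∈ gSeq p t 0 from
            hh ⟨MR, [0, 2, 3, 4, 1]⟩ (by simp))
        omega
      · refine ⟨fun x => [br p.length, br (p.length-1), .null 0, .null 1, .null 2].getD x e1,
          rfl, ?_, ?_, ?_⟩
        · intro x hx hnx
          obtain ⟨a, ha, hxa⟩ := hx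
          rw [List.mem_singleton] at ha
          subst ha
          simp only [List.mem_cons, List.not_mem_nil, or_false] at hxa
          rcases hxa with rfl|rfl|rfl|rfl|rfl
          · exact absurd (by simp) hnx
          · exact ⟨(by simp [Term.isConst] : ¬ (Term.null 0).isConst), fun had => by
              obtain ⟨k, hk, -⟩ := gSeq_null (show Term.null 0 ∈ adom (gSeq p t 0) from had)
              omega⟩
          · exact ⟨(by simp [Term.isConst] : ¬ (Term.null 1).isConst), fun had => by
              obtain ⟨k, hk, -⟩ := gSeq_null (show Term.null 1 ∈ adom (gSeq p t 0) from had)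
              omega⟩
          · exact ⟨(by simp [Term.isConst] : ¬ (Term.null 2).isConst), fun had => by
              obtain ⟨k, hk, -⟩ := gSeq_null (show Term.null 2 ∈ adom (gSeq p t 0) from had)
              omega⟩
          · exact absurd (by simp) hnx
        · intro x y hx hy hnx hny heq
          obtain ⟨a, ha, hxa⟩ := hx
          rw [List.mem_singleton] at ha
          subst ha
          obtain ⟨a', ha', hya⟩ := hy
          rw [List.mem_singleton] at ha'
          subst ha'
          simp only [List.mem_cons, List.not_mem_nil, or_false] at hxa hya
          have hx' : x = 2 ∨ x = 3 ∨ x = 4 := by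
            rcases hxa with rfl|rfl|rfl|rfl|rfl
            · exact absurd (by simp) hnx
            · exact Or.inl rfl
            · exact Or.inr (Or.inl rfl)
            · exact Or.inr (Or.inr rfl)
            · exact absurd (by simp) hnx
          have hy' : y = 2 ∨ y = 3 ∨ y = 4 := by
            rcases hya with rfl|rfl|rfl|rfl|rfl
            · exact absurd (by simp) hny
            · exact Or.inl rfl
            · exact Or.inr (Or.inl rfl)
            · exact Or.inr (Or.inr rfl)
            · exact absurd (by simp) hny
          rcases hx' with rfl|rfl|rfl <;> rcases hy' with rfl|rfl|rfl <;>
            first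
            | rfl
            | (injection heq with h2; omega)
        · show gSeq p t 1 = _
          rw [gSeq_one]
          congr 1
          ext F
          constructor
          · rintro rfl
            exact ⟨⟨MR, [0, 2, 3, 4, 1]⟩, by simp, rfl⟩
          · rintro ⟨a, ha, rfl⟩
            rw [List.mem_singleton] at ha
            subst ha
            exact rfl
    · -- TGD3 on Ms k
      refine ⟨⟨[⟨MR, [0, 1, 2, 3, 4]⟩],
        [⟨PyrR, [0, 1]⟩, ⟨ThiR, [4, 3]⟩, ⟨ChnR, [2, 1]⟩, ⟨ChnR, [2, 3]⟩], [0, 1, 2, 3, 4]⟩,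
        by simp [Tmyth],
        [uu p.length k, uu p.length (k+1), gg (k+1), vv p.length (k+1), vv p.length k],
        ⟨⟨fun x => [uu p.length k, uu p.length (k+1), gg (k+1), vv p.length (k+1),
            vv p.length k].getD x e1, ?_, rfl⟩, ?_⟩, ?_⟩
      · intro a ha
        rw [List.mem_singleton] at ha
        subst ha
        exact Or.inl (Or.inr ⟨k, by omega, rfl⟩)
      · rintro ⟨h, hh, hc⟩
        simp only [List.map_cons, List.map_nil, List.cons.injEq, and_true] at hc
        obtain ⟨e0, e1', -, -, -⟩ := hc
        have hPf : f2 PyrR (h 0) (h 1) ∈ gSeq p t (2*k+1) := hh ⟨PyrR, [0, 1]⟩ (by simp)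
        rw [e0, e1'] at hPf
        exact pyr_not_in (le_refl _) hPf
      · refine ⟨fun x => [uu p.length k, uu p.length (k+1), gg (k+1), vv p.length (k+1),
            vv p.length k].getD x e1, rfl, ?_, ?_, ?_⟩
        · intro x hx hnx
          exfalso
          obtain ⟨a, ha, hxa⟩ := hx
          simp only [List.mem_cons, List.not_mem_nil, or_false] at ha
          rcases ha with rfl|rfl|rfl|rfl <;> simp only [List.mem_cons, List.not_mem_nil,
            or_false] at hxa <;> apply hnx <;> rcases hxa with rfl|rfl <;> simp
        · intro x y hx hy hnx hny heq
          exfalso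
          obtain ⟨a, ha, hxa⟩ := hx
          simp only [List.mem_cons, List.not_mem_nil, or_false] at ha
          rcases ha with rfl|rfl|rfl|rfl <;> simp only [List.mem_cons, List.not_mem_nil,
            or_false] at hxa <;> apply hnx <;> rcases hxa with rfl|rfl <;> simp
        · show gSeq p t (2*k+2) = _
          rw [gSeq_stepT3]
          congr 1
          ext F
          constructor
          · rintro (rfl|rfl|rfl|rfl)
            · exact ⟨⟨PyrR, [0, 1]⟩, by simp, rfl⟩
            · exact ⟨⟨ThiR, [4, 3]⟩, by simp, rfl⟩
            · exact ⟨⟨ChnR, [2, 1]⟩, by simp, rfl⟩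
            · exact ⟨⟨ChnR, [2, 3]⟩, by simp, rfl⟩
          · rintro ⟨a, ha, rfl⟩
            simp only [List.mem_cons, List.not_mem_nil, or_false] at ha
            rcases ha with rfl|rfl|rfl|rfl
            · exact Or.inl rfl
            · exact Or.inr (Or.inl rfl)
            · exact Or.inr (Or.inr (Or.inl rfl))
            · exact Or.inr (Or.inr (Or.inr rfl))
    · -- TGD2 on Ms k
      refine ⟨⟨[⟨MR, [0, 1, 2, 3, 4]⟩], [⟨MR, [1, 5, 6, 7, 3]⟩], [1, 3]⟩, by simp [Tmyth],
        [uu p.length (k+1), vv p.length (k+1)],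
        ⟨⟨fun x => [uu p.length k, uu p.length (k+1), gg (k+1), vv p.length (k+1),
            vv p.length k].getD x e1, ?_, rfl⟩, ?_⟩, ?_⟩
      · intro a ha
        rw [List.mem_singleton] at ha
        subst ha
        exact Or.inl (Or.inr ⟨k, by omega, rfl⟩)
      · rintro ⟨h, hh, hc⟩
        simp only [List.map_cons, List.map_nil, List.cons.injEq, and_true] at hc
        obtain ⟨e1', e3⟩ := hc
        obtain ⟨k', hk', heq⟩ := gSeq_MR
          (show (⟨MR, [h 1, h 5, h 6, h 7, h 3]⟩ : Fct) ∈ gSeq p t (2*k+2) from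
            hh ⟨MR, [1, 5, 6, 7, 3]⟩ (by simp))
        simp only [Ms, Fct.mk.injEq, List.cons.injEq, and_true, true_and] at heq
        obtain ⟨f1, -, -, -, -⟩ := heq
        rw [e1'] at f1
        cases k' with
        | zero => exact absurd f1.symm (by simp [uu, br])
        | succ k'' =>
          simp only [uu, Term.null.injEq] at f1
          omega
      · refine ⟨fun x => [uu p.length k, uu p.length (k+1), gg (k+1), vv p.length (k+1),
            vv p.length k, uu p.length (k+2), gg (k+2), vv p.length (k+2)].getD x e1,
          rfl, ?_, ?_, ?_⟩
        · intro x hx hnx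
          obtain ⟨a, ha, hxa⟩ := hx
          rw [List.mem_singleton] at ha
          subst ha
          simp only [List.mem_cons, List.not_mem_nil, or_false] at hxa
          rcases hxa with rfl|rfl|rfl|rfl|rfl
          · exact absurd (by simp) hnx
          · exact ⟨(by simp [Term.isConst] : ¬ (Term.null (3*(k+1))).isConst), fun had => by
              obtain ⟨k', hk', hb⟩ := gSeq_null
                (show Term.null (3*(k+1)) ∈ adom (gSeq p t (2*k+2)) from had)
              omega⟩
          · exact ⟨(by simp [Term.isConst] : ¬ (Term.null (3*(k+1)+1)).isConst), fun had => by
              obtain ⟨k', hk', hb⟩ := gSeq_null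
                (show Term.null (3*(k+1)+1) ∈ adom (gSeq p t (2*k+2)) from had)
              omega⟩
          · exact ⟨(by simp [Term.isConst] : ¬ (Term.null (3*(k+1)+2)).isConst), fun had => by
              obtain ⟨k', hk', hb⟩ := gSeq_null
                (show Term.null (3*(k+1)+2) ∈ adom (gSeq p t (2*k+2)) from had)
              omega⟩
          · exact absurd (by simp) hnx
        · intro x y hx hy hnx hny heq
          obtain ⟨a, ha, hxa⟩ := hx
          rw [List.mem_singleton] at ha
          subst ha
          obtain ⟨a', ha', hya⟩ := hy
          rw [List.mem_singleton] at ha'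
          subst ha'
          simp only [List.mem_cons, List.not_mem_nil, or_false] at hxa hya
          have hx' : x = 5 ∨ x = 6 ∨ x = 7 := by
            rcases hxa with rfl|rfl|rfl|rfl|rfl
            · exact absurd (by simp) hnx
            · exact Or.inl rfl
            · exact Or.inr (Or.inl rfl)
            · exact Or.inr (Or.inr rfl)
            · exact absurd (by simp) hnx
          have hy' : y = 5 ∨ y = 6 ∨ y = 7 := by
            rcases hya with rfl|rfl|rfl|rfl|rfl
            · exact absurd (by simp) hny
            · exact Or.inl rfl
            · exact Or.inr (Or.inl rfl)
            · exact Or.inr (Or.inr rfl)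
            · exact absurd (by simp) hny
          rcases hx' with rfl|rfl|rfl <;> rcases hy' with rfl|rfl|rfl <;>
            first
            | rfl
            | (injection heq with h2; omega)
        · show gSeq p t (2*k+3) = _
          rw [gSeq_stepMs]
          congr 1
          ext F
          constructor
          · rintro rfl
            exact ⟨⟨MR, [1, 5, 6, 7, 3]⟩, by simp, rfl⟩
          · rintro ⟨a, ha, rfl⟩
            rw [List.mem_singleton] at ha
            subst ha
            exact rfl
  · -- fairness
    intro i tg htg c happ
    simp only [Tmyth, List.mem_cons, List.not_mem_nil, or_false] at htg
    rcases htg with rfl|rfl|rfl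
    · obtain ⟨⟨g, hbody, hc⟩, -⟩ := happ
      obtain ⟨hg0, hg1⟩ := gSeq_Enc
        (show f2 EncR (g 0) (g 1) ∈ gSeq p t i from hbody ⟨EncR, [0, 1]⟩ (by simp))
      refine ⟨i+1, by omega, Or.inr ?_⟩
      rintro ⟨-, hneg⟩
      refine hneg ⟨fun x => [br p.length, br (p.length-1), .null 0, .null 1,
        .null 2].getD x e1, ?_, ?_⟩
      · intro a ha
        rw [List.mem_singleton] at ha
        subst ha
        exact Or.inl (Or.inr ⟨0, by omega, rfl⟩)
      · rw [← hc]
        apply List.map_congr_left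
        intro x hx
        simp at hx
        rcases hx with rfl|rfl
        · rw [hg0]
          exact rfl
        · rw [hg1]
          exact rfl
    · obtain ⟨⟨g, hbody, hc⟩, -⟩ := happ
      obtain ⟨k, hk, heq⟩ := gSeq_MR
        (show (⟨MR, [g 0, g 1, g 2, g 3, g 4]⟩ : Fct) ∈ gSeq p t i from
          hbody ⟨MR, [0, 1, 2, 3, 4]⟩ (by simp))
      simp only [Ms, Fct.mk.injEq, List.cons.injEq, and_true, true_and] at heq
      obtain ⟨e0, e1', e2', e3, e4⟩ := heq
      refine ⟨i + 2*k + 3, by omega, Or.inr ?_⟩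
      rintro ⟨-, hneg⟩
      refine hneg ⟨fun x => [uu p.length k, uu p.length (k+1), gg (k+1), vv p.length (k+1),
        vv p.length k, uu p.length (k+2), gg (k+2), vv p.length (k+2)].getD x e1, ?_, ?_⟩
      · intro a ha
        rw [List.mem_singleton] at ha
        subst ha
        exact Or.inl (Or.inr ⟨k+1, by omega, rfl⟩)
      · rw [← hc]
        apply List.map_congr_left
        intro x hx
        simp at hx
        rcases hx with rfl|rfl
        · rw [e1']
          exact rfl
        · rw [e3]
          exact rfl
    · obtain ⟨⟨g, hbody, hc⟩, -⟩ := happ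
      obtain ⟨k, hk, heq⟩ := gSeq_MR
        (show (⟨MR, [g 0, g 1, g 2, g 3, g 4]⟩ : Fct) ∈ gSeq p t i from
          hbody ⟨MR, [0, 1, 2, 3, 4]⟩ (by simp))
      simp only [Ms, Fct.mk.injEq, List.cons.injEq, and_true, true_and] at heq
      obtain ⟨e0, e1', e2', e3, e4⟩ := heq
      refine ⟨i + 2*k + 2, by omega, Or.inr ?_⟩
      rintro ⟨-, hneg⟩
      refine hneg ⟨g, ?_, hc⟩
      intro a ha
      simp only [List.mem_cons, List.not_mem_nil, or_false] at ha
      rcases ha with rfl|rfl|rfl|rfl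
      · refine Or.inr ⟨k, by omega, ?_⟩
        show f2 PyrR (g 0) (g 1) ∈ T3f p.length k
        rw [e0, e1']
        exact Or.inl rfl
      · refine Or.inr ⟨k, by omega, ?_⟩
        show f2 ThiR (g 4) (g 3) ∈ T3f p.length k
        rw [e4, e3]
        exact Or.inr (Or.inl rfl)
      · refine Or.inr ⟨k, by omega, ?_⟩
        show f2 ChnR (g 2) (g 1) ∈ T3f p.length k
        rw [e2', e1']
        exact Or.inr (Or.inr (Or.inl rfl))
      · refine Or.inr ⟨k, by omega, ?_⟩
        show f2 ChnR (g 2) (g 3) ∈ T3f p.length k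
        rw [e2', e3]
        exact Or.inr (Or.inr (Or.inr rfl))

end Aux
/-- Observation 1: there is a database-preserving `ΣQ`-homomorphism from
`chase_{T_myth}(River_κ)` to `River_κ` iff `t_m ≠ p_{m+1}` for some `1 ≤ m < n`. -/
theorem river_hom_iff (p t : List ℕ) (hlen : p.length = t.length) (hn : 1 ≤ p.length)
    (hp : ∀ x ∈ p, 1 ≤ x) (ht : ∀ x ∈ t, 1 ≤ x) :
    HomTo SQmyth (chase Tmyth (River p t)) (River p t) ↔
      ∃ m, 1 ≤ m ∧ m < p.length ∧ t.getD (m - 1) 0 ≠ p.getD m 0 := by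
  classical
  have hex : ∃ J, IsChaseResult Tmyth (River p t) J := chase_exists p t
  have hchase : IsChaseResult Tmyth (River p t) (chase Tmyth (River p t)) := by
    unfold chase
    rw [dif_pos hex]
    exact hex.choose_spec
  constructor
  · rintro ⟨h, hdb, hhom⟩
    by_contra hno
    push_neg at hno
    have hsync : ∀ idx, idx + 1 < p.length → t.getD idx 0 = p.getD (idx+1) 0 := by
      intro idx hidx
      have := hno (idx+1) (by omega) (by omega)
      simpa using this
    exact (forward_no_hom hlen hn hp ht hsync (chaseResult_sup hchase)
      (chaseResult_model hchase) hdb hhom).elim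
  · rintro ⟨m0, hm1, hm2, hm3⟩
    set P : ℕ → Prop := fun m => 1 ≤ m ∧ m < p.length ∧ t.getD (m-1) 0 ≠ p.getD m 0 with hPdef
    haveI : DecidablePred P := Classical.decPred P
    have hspec : P (Nat.findGreatest P p.length) :=
      Nat.findGreatest_spec (le_of_lt hm2) (show P m0 from ⟨hm1, hm2, hm3⟩)
    obtain ⟨g1, g2, g3⟩ := hspec
    have hsync : ∀ idx, Nat.findGreatest P p.length ≤ idx →
        idx + 1 < p.length → t.getD idx 0 = p.getD (idx+1) 0 := by
      intro idx hMi hidx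
      by_contra hne
      exact absurd (show P (idx+1) from ⟨by omega, by omega, by simpa using hne⟩)
        (Nat.findGreatest_is_greatest (n := p.length) (by omega) (by omega))
    exact backward_hom hlen hn hp ht g1 g2 g3 hsync hchase
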